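/- arXiv:2411.13094 — 11 statements merged into one kernel-verified Lean document; each statement's English description precedes it below -/
import Mathlib

section
/- Let α ∈ (-1,1), α ≠ 0, and let z ∈ ℂ satisfy |z| > 1. Then the quadratic equation (α(α-1)/2)·κ² + (1-α²-z)·κ + (α(α+1)/2) = 0 has exactly one root with |κ| > 1 and exactly one root with 0 < |κ| < 1. -/
open Complex
set_option maxHeartbeats 1000000


private lemma real_key (α s x y : ℝ) (h1 : -1 < α) (h2 : α < 1) (hα0 : α ≠ 0)
    (hs0 : 0 < s) (hxy : x^2 + y^2 = s)
    (hs : (s - 1) * (s - ((1+α)/(1-α))^2) ≤ 0) :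
    ((1 - α^2) + (α*(α-1)/2)*x + (α*(α+1)/2)*(x/s))^2
      + ((α*(α-1)/2)*y - (α*(α+1)/2)*(y/s))^2 ≤ 1 := by
  have hy2 : y^2 = s - x^2 := by linarith [hxy]
  have hA2 : 0 < α^2 := by positivity
  have hb : 0 < 1 - α^2 := by nlinarith
  have hm : 0 < α^2 * (1 - α^2) := by positivity
  have h4 : (0:ℝ) < (1-α)^2 := by nlinarith
  have hs2 : (s-1) * ((1-α)^2*s - (1+α)^2) ≤ 0 := by
    have hP2 : (1-α)^2 * ((1+α)/(1-α))^2 = (1+α)^2 := by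
      field_simp
      exact mul_div_cancel_left₀ _ (by linarith : (1:ℝ) - α ≠ 0)
    have hcalc : (s-1) * ((1-α)^2*s - (1+α)^2)
        = (1-α)^2 * ((s - 1) * (s - ((1 + α) / (1 - α)) ^ 2)) := by
      linear_combination (s - 1) * hP2
    rw [hcalc]
    exact mul_nonpos_of_nonneg_of_nonpos h4.le hs
  have hH : 0 ≤ (1-(1-α^2)^2)*s - (α*(α-1)/2*s - α*(α+1)/2)^2
      - 2*(1-α^2)*(α*(α-1)/2*s + α*(α+1)/2)*x + (α^2*(1-α^2))*x^2 := by
    have hident : (α^2*(1-α^2)) * ((1-(1-α^2)^2)*s - (α*(α-1)/2*s - α*(α+1)/2)^2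
        - 2*(1-α^2)*(α*(α-1)/2*s + α*(α+1)/2)*x + (α^2*(1-α^2))*x^2)
        = (α^2*(1-α^2)*x - (1-α^2)*(α*(α-1)/2*s + α*(α+1)/2))^2
          - (α^2*(1-α^2))*((s-1) * ((1-α)^2*s - (1+α)^2))/4 := by ring
    have hge : 0 ≤ (α^2*(1-α^2)) * ((1-(1-α^2)^2)*s - (α*(α-1)/2*s - α*(α+1)/2)^2
        - 2*(1-α^2)*(α*(α-1)/2*s + α*(α+1)/2)*x + (α^2*(1-α^2))*x^2) := by
      rw [hident]
      have h5 := mul_nonneg hm.le (neg_nonneg.2 hs2)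
      nlinarith [sq_nonneg (α^2*(1-α^2)*x - (1-α^2)*(α*(α-1)/2*s + α*(α+1)/2))]
    exact nonneg_of_mul_nonneg_right hge hm
  have hre : (1 - α^2) + (α*(α-1)/2)*x + (α*(α+1)/2)*(x/s)
      = ((1-α^2)*s + (α*(α-1)/2*s + α*(α+1)/2) * x)/s := by
    field_simp; ring
  have him : (α*(α-1)/2)*y - (α*(α+1)/2)*(y/s)
      = ((α*(α-1)/2*s - α*(α+1)/2) * y)/s := by
    field_simp
  have hBy : (α*(α-1)/2*s - α*(α+1)/2)^2 * y^2
      = (α*(α-1)/2*s - α*(α+1)/2)^2 * (s - x^2) := by rw [hy2]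
  rw [hre, him, div_pow, div_pow, ← add_div, div_le_one (by positivity)]
  nlinarith [mul_nonneg hs0.le hH, hBy]

private lemma ellipse_bound (α : ℝ) (h1 : -1 < α) (h2 : α < 1) (hα0 : α ≠ 0)
    (κ : ℂ) (hκ : κ ≠ 0)
    (hs : (Complex.normSq κ - 1) * (Complex.normSq κ - ((1+α)/(1-α))^2) ≤ 0) :
    ‖((1 - α^2 : ℝ) : ℂ) + ((α*(α-1)/2 : ℝ):ℂ) * κ + ((α*(α+1)/2 : ℝ):ℂ) * κ⁻¹‖ ≤ 1 := by
  have hs0 : 0 < Complex.normSq κ := Complex.normSq_pos.2 hκ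
  set w : ℂ := ((1 - α^2 : ℝ) : ℂ) + ((α*(α-1)/2 : ℝ):ℂ) * κ + ((α*(α+1)/2 : ℝ):ℂ) * κ⁻¹ with hw
  have hwre : w.re = (1 - α^2) + (α*(α-1)/2) * κ.re + (α*(α+1)/2) * (κ.re/Complex.normSq κ) := by
    simp [hw, Complex.add_re, Complex.mul_re, Complex.inv_re, Complex.inv_im,
      Complex.ofReal_re, Complex.ofReal_im, ← Complex.ofReal_pow]
  have hwim : w.im = (α*(α-1)/2) * κ.im - (α*(α+1)/2) * (κ.im/Complex.normSq κ) := by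
    simp [hw, Complex.add_im, Complex.mul_im, Complex.inv_re, Complex.inv_im,
      Complex.ofReal_re, Complex.ofReal_im, ← Complex.ofReal_pow]
    ring
  have hxy : κ.re^2 + κ.im^2 = Complex.normSq κ := by
    rw [Complex.normSq_apply]; ring
  have key := real_key α (Complex.normSq κ) κ.re κ.im h1 h2 hα0 hs0 hxy hs
  rw [← hwre, ← hwim] at key
  have habs2 : (‖w‖)^2 ≤ 1 := by
    rw [Complex.sq_norm, Complex.normSq_apply]
    nlinarith [key]
  nlinarith [habs2, norm_nonneg w]


/-- The Lax-Wendroff dispersion relation `(α(α-1)/2)κ² + (1-α²-z)κ + (α(α+1)/2) = 0`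
has, for `|z| > 1`, exactly one root with `|κ| > 1` and exactly one with `0 < |κ| < 1`. -/
theorem stmt_0 (α : ℝ) (hα : α ∈ Set.Ioo (-1 : ℝ) 1) (hα0 : α ≠ 0)
    (z : ℂ) (hz : 1 < ‖z‖) :
    (∃! κ : ℂ, ((α * (α - 1) / 2 : ℝ) : ℂ) * κ ^ 2 + (1 - (α : ℂ) ^ 2 - z) * κ
        + ((α * (α + 1) / 2 : ℝ) : ℂ) = 0 ∧ 1 < ‖κ‖) ∧
    (∃! κ : ℂ, ((α * (α - 1) / 2 : ℝ) : ℂ) * κ ^ 2 + (1 - (α : ℂ) ^ 2 - z) * κ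
        + ((α * (α + 1) / 2 : ℝ) : ℂ) = 0 ∧ 0 < ‖κ‖ ∧ ‖κ‖ < 1) := by
  obtain ⟨h1, h2⟩ := hα
  set A : ℂ := ((α * (α - 1) / 2 : ℝ) : ℂ) with hAdef
  set C : ℂ := ((α * (α + 1) / 2 : ℝ) : ℂ) with hCdef
  set B : ℂ := 1 - (α : ℂ) ^ 2 - z with hBdef
  have hA : A ≠ 0 := by
    rw [hAdef, Complex.ofReal_ne_zero]
    exact div_ne_zero (mul_ne_zero hα0 (sub_ne_zero.2 (ne_of_lt h2))) two_ne_zero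
  have hC : C ≠ 0 := by
    rw [hCdef, Complex.ofReal_ne_zero]
    have : α + 1 ≠ 0 := by intro h; linarith [h]
    exact div_ne_zero (mul_ne_zero hα0 this) two_ne_zero
  set P : ℝ := (1 + α) / (1 - α) with hPdef
  have hP0 : 0 < P := div_pos (by linarith) (by linarith)
  -- classification of roots
  have hclass : ∀ κ : ℂ, A * κ ^ 2 + B * κ + C = 0 →
      0 < ‖κ‖ ∧ 0 < ((‖κ‖)^2 - 1) * ((‖κ‖)^2 - P^2) := by
    intro κ hroot
    have hκ0 : κ ≠ 0 := by
      rintro rfl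
      simp at hroot
      exact hC hroot
    refine ⟨norm_pos_iff.mpr hκ0, ?_⟩
    by_contra hcon
    push_neg at hcon
    have h5 : z * κ = A * κ ^ 2 + (1 - (α : ℂ) ^ 2) * κ + C := by
      rw [hBdef] at hroot
      linear_combination -hroot
    have hzeq : z = ((1 - α ^ 2 : ℝ) : ℂ) + A * κ + C * κ⁻¹ := by
      have hcast : ((1 - α ^ 2 : ℝ) : ℂ) = 1 - (α : ℂ) ^ 2 := by push_cast; ring
      rw [hcast]
      have h6 : z * κ * κ⁻¹ = (A * κ ^ 2 + (1 - (α : ℂ) ^ 2) * κ + C) * κ⁻¹ := by rw [h5]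
      rw [mul_inv_cancel_right₀ hκ0] at h6
      rw [h6]
      field_simp
      ring
    have hb := ellipse_bound α h1 h2 hα0 κ hκ0 (by
      rw [Complex.normSq_eq_norm_sq]
      exact hcon)
    rw [hAdef, hCdef] at hzeq
    rw [← hzeq] at hb
    linarith
  -- the two roots
  obtain ⟨sd, hsd⟩ := IsAlgClosed.exists_pow_nat_eq (discrim A B C) (n := 2) two_pos
  have hsd' : discrim A B C = sd * sd := by rw [← hsd]; ring
  have hiff : ∀ x : ℂ, A * x ^ 2 + B * x + C = 0 ↔
      x = (-B + sd) / (2 * A) ∨ x = (-B - sd) / (2 * A) :=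
    fun x => by rw [pow_two]; exact quadratic_eq_zero_iff hA hsd' x
  set r₁ : ℂ := (-B + sd) / (2 * A) with hr1def
  set r₂ : ℂ := (-B - sd) / (2 * A) with hr2def
  have hr₁ : A * r₁ ^ 2 + B * r₁ + C = 0 := (hiff r₁).2 (Or.inl rfl)
  have hr₂ : A * r₂ ^ 2 + B * r₂ + C = 0 := (hiff r₂).2 (Or.inr rfl)
  have hvieta : r₁ * r₂ = C / A := by
    have hd : B ^ 2 - 4 * A * C = sd * sd := by rw [← hsd']; rfl
    have e : r₁ * r₂ = (B ^ 2 - sd * sd) / (4 * A ^ 2) := by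
      rw [hr1def, hr2def]
      field_simp
      ring
    have e' : B ^ 2 - sd * sd = 4 * A * C := by linear_combination hd
    rw [e, e']
    field_simp
  have habs : ‖r₁‖ * ‖r₂‖ = P := by
    rw [← norm_mul, hvieta, norm_div, hAdef, hCdef]
    simp only [Complex.norm_real, Real.norm_eq_abs]
    have e1 : |α * (α + 1) / 2| = |α| * (α + 1) / 2 := by
      rw [abs_div, abs_mul, abs_of_pos (by linarith : (0:ℝ) < α + 1)]; norm_num
    have e2 : |α * (α - 1) / 2| = |α| * (1 - α) / 2 := by
      rw [abs_div, abs_mul, abs_of_neg (by linarith : α - 1 < (0:ℝ))]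
      norm_num
    have hαp : 0 < |α| := abs_pos.2 hα0
    rw [e1, e2, hPdef,
      div_eq_div_iff (div_pos (mul_pos hαp (by linarith : (0:ℝ) < 1 - α)) two_pos).ne'
        (by linarith : (0:ℝ) < 1 - α).ne']
    ring
  obtain ⟨hp₁, hc₁⟩ := hclass r₁ hr₁
  obtain ⟨hp₂, hc₂⟩ := hclass r₂ hr₂
  have split : ∀ t : ℝ, 0 < t → 0 < (t^2 - 1) * (t^2 - P^2) →
      (1 < t ∧ P < t) ∨ (t < 1 ∧ t < P) := by
    intro t ht hprod
    rcases mul_pos_iff.1 hprod with ⟨ha, hb⟩ | ⟨ha, hb⟩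
    · left; constructor <;> nlinarith
    · right; constructor <;> nlinarith
  have d₁ := split _ hp₁ hc₁
  have d₂ := split _ hp₂ hc₂
  -- helper for final construction
  have main : ∀ u v : ℂ,
      (A * u ^ 2 + B * u + C = 0) → (A * v ^ 2 + B * v + C = 0) →
      1 < ‖u‖ → 0 < ‖v‖ → ‖v‖ < 1 →
      (∀ κ : ℂ, A * κ ^ 2 + B * κ + C = 0 → κ = u ∨ κ = v) →
      (∃! κ : ℂ, (A * κ ^ 2 + B * κ + C = 0) ∧ 1 < ‖κ‖) ∧
      (∃! κ : ℂ, (A * κ ^ 2 + B * κ + C = 0) ∧ 0 < ‖κ‖ ∧ ‖κ‖ < 1) := by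
    intro u v hu hv hub hvp hvs hall
    constructor
    · refine ⟨u, ⟨hu, hub⟩, ?_⟩
      rintro κ ⟨hk, hk1⟩
      rcases hall κ hk with rfl | rfl
      · rfl
      · linarith
    · refine ⟨v, ⟨hv, hvp, hvs⟩, ?_⟩
      rintro κ ⟨hk, hk1, hk2⟩
      rcases hall κ hk with rfl | rfl
      · linarith
      · rfl
  have hall : ∀ κ : ℂ, A * κ ^ 2 + B * κ + C = 0 → κ = r₁ ∨ κ = r₂ :=
    fun κ hk => (hiff κ).1 hk
  rcases d₁ with ⟨h11, h12⟩ | ⟨h11, h12⟩ <;> rcases d₂ with ⟨h21, h22⟩ | ⟨h21, h22⟩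
  · exfalso; nlinarith
  · exact main r₁ r₂ hr₁ hr₂ h11 hp₂ h21 hall
  · exact main r₂ r₁ hr₂ hr₁ h21 hp₁ h11 (fun κ hk => (hall κ hk).symm)
  · exfalso; nlinarith
end

section
/- Let α ∈ (-1,1), α ≠ 0. The two roots of (α(α-1)/2)·κ² + (1-α²-z)·κ + (α(α+1)/2) = 0 (as a quadratic in κ) have equal modulus if and only if z belongs to the segment {1 - α² + i t α √(1-α²) : t ∈ [-1,1]}. -/
set_option maxHeartbeats 1000000 in
/-- The two roots of the Lax-Wendroff dispersion relation have equal modulus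
iff `z` lies on the segment `{1 - α² + i t α √(1-α²) : t ∈ [-1,1]}`. -/
theorem stmt_1 (α : ℝ) (hα : α ∈ Set.Ioo (-1 : ℝ) 1) (hα0 : α ≠ 0) (z : ℂ) :
    (∀ κ₁ κ₂ : ℂ,
        ((α * (α - 1) / 2 : ℝ) : ℂ) * κ₁ ^ 2 + (1 - (α : ℂ) ^ 2 - z) * κ₁
          + ((α * (α + 1) / 2 : ℝ) : ℂ) = 0 →
        ((α * (α - 1) / 2 : ℝ) : ℂ) * κ₂ ^ 2 + (1 - (α : ℂ) ^ 2 - z) * κ₂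
          + ((α * (α + 1) / 2 : ℝ) : ℂ) = 0 →
        ‖κ₁‖ = ‖κ₂‖) ↔
    ∃ t ∈ Set.Icc (-1 : ℝ) 1,
      z = 1 - (α : ℂ) ^ 2 + Complex.I * (t : ℂ) * (α : ℂ) * (Real.sqrt (1 - α ^ 2) : ℂ) := by
  obtain ⟨hα1, hα2⟩ := hα
  have h1α : (0:ℝ) < 1 - α ^ 2 := by nlinarith
  have hs : Real.sqrt (1 - α ^ 2) ^ 2 = 1 - α ^ 2 := Real.sq_sqrt h1α.le
  have hs0 : Real.sqrt (1 - α ^ 2) ≠ 0 := by positivity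
  have hα2pos : (0:ℝ) < α ^ 2 := by positivity
  set A : ℝ := α * (α - 1) / 2 with hAdef
  set C : ℝ := α * (α + 1) / 2 with hCdef
  have hA0 : A ≠ 0 := by
    have h1 : α - 1 ≠ 0 := by intro h; nlinarith
    rw [hAdef]
    exact div_ne_zero (mul_ne_zero hα0 h1) two_ne_zero
  have hA0c : (A : ℂ) ≠ 0 := by exact_mod_cast hA0
  have h2A : (2 * (A:ℂ)) ≠ 0 := by simpa using hA0c
  have hAC : A * C = -(α ^ 2 * (1 - α ^ 2)) / 4 := by rw [hAdef, hCdef]; ring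
  have hACneg : A * C < 0 := by rw [hAC]; nlinarith
  set b : ℂ := 1 - (α:ℂ) ^ 2 - z with hbdef
  clear_value A C b
  constructor
  · intro h
    obtain ⟨d, hd⟩ := IsAlgClosed.exists_pow_nat_eq (b ^ 2 - 4 * (A:ℂ) * (C:ℂ)) (n := 2) (by norm_num)
    set κ₁ : ℂ := (-b + d) / (2 * A) with hk1def
    set κ₂ : ℂ := (-b - d) / (2 * A) with hk2def
    clear_value κ₁ κ₂
    have e1 : (A:ℂ) * κ₁ ^ 2 + b * κ₁ + (C:ℂ) = 0 := by
      have expand : (A:ℂ) * κ₁ ^ 2 + b * κ₁ + (C:ℂ)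
          = (d ^ 2 - (b ^ 2 - 4 * (A:ℂ) * (C:ℂ))) / (4 * (A:ℂ)) := by
        rw [hk1def]; field_simp; ring
      rw [expand, hd]; simp
    have e2 : (A:ℂ) * κ₂ ^ 2 + b * κ₂ + (C:ℂ) = 0 := by
      have expand : (A:ℂ) * κ₂ ^ 2 + b * κ₂ + (C:ℂ)
          = (d ^ 2 - (b ^ 2 - 4 * (A:ℂ) * (C:ℂ))) / (4 * (A:ℂ)) := by
        rw [hk2def]; field_simp; ring
      rw [expand, hd]; simp
    have habs := h κ₁ κ₂ e1 e2
    have h2A' : ‖2 * (A:ℂ)‖ ≠ 0 := by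
      simpa [map_ne_zero] using h2A
    have hnum : Complex.normSq (-b + d) = Complex.normSq (-b - d) := by
      rw [hk1def, hk2def, norm_div, norm_div, div_eq_div_iff h2A' h2A'] at habs
      have habs' : ‖-b + d‖ = ‖-b - d‖ :=
        mul_right_cancel₀ h2A' habs
      have := congrArg (· ^ 2) habs'
      simpa [Complex.sq_norm] using this
    have hre : b.re * d.re + b.im * d.im = 0 := by
      simp only [Complex.normSq_apply, Complex.add_re, Complex.add_im, Complex.sub_re,
        Complex.sub_im, Complex.neg_re, Complex.neg_im] at hnum
      linear_combination -hnum / 4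
    rw [Complex.ext_iff] at hd
    obtain ⟨hdre, hdim⟩ := hd
    simp only [pow_two, Complex.mul_re, Complex.mul_im, Complex.sub_re, Complex.sub_im,
      Complex.ofReal_re, Complex.ofReal_im, Complex.re_ofNat, Complex.im_ofNat] at hdre hdim
    -- hdre : d.re*d.re - d.im*d.im = b.re*b.re - b.im*b.im - 4*A*C (roughly)
    -- hdim : cross terms
    have huv : d.re * d.im = b.re * b.im := by linarith
    have h0 : (b.im * d.im) ^ 2 + (b.re * b.im) ^ 2 = 0 := by
      linear_combination (b.im * d.im) * hre - (b.re * b.im) * huv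
    have hyv : b.im * d.im = 0 := by
      have h1 : (b.im * d.im) ^ 2 ≤ 0 := by nlinarith [sq_nonneg (b.re * b.im)]
      exact pow_eq_zero_iff two_ne_zero |>.mp (le_antisymm h1 (sq_nonneg _))
    have hxu : b.re * d.re = 0 := by linarith
    have hxy : b.re * b.im = 0 := by
      have h1 : (b.re * b.im) ^ 2 ≤ 0 := by nlinarith [sq_nonneg (b.im * d.im)]
      exact pow_eq_zero_iff two_ne_zero |>.mp (le_antisymm h1 (sq_nonneg _))
    have hmain : b.re = 0 ∧ b.im ^ 2 ≤ α ^ 2 * (1 - α ^ 2) := by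
      rcases mul_eq_zero.mp hxy with hx | hy
      · refine ⟨hx, ?_⟩
        rcases eq_or_ne b.im 0 with hy | hy
        · rw [hy]; nlinarith
        · have hv : d.im = 0 := by
            rcases mul_eq_zero.mp hyv with h' | h'
            · exact absurd h' hy
            · exact h'
          nlinarith [sq_nonneg d.re]
      · have hx : b.re = 0 := by
          by_contra hx
          have hu : d.re = 0 := by
            rcases mul_eq_zero.mp hxu with h' | h'
            · exact absurd h' hx
            · exact h'
          nlinarith [sq_nonneg d.im, mul_self_pos.mpr hx]
        refine ⟨hx, ?_⟩
        rw [hy]; nlinarith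
    obtain ⟨hx0, hy2⟩ := hmain
    have hxre : b.re = 1 - α ^ 2 - z.re := by
      rw [hbdef]; simp [← Complex.ofReal_pow]
    have hyim : b.im = -z.im := by
      rw [hbdef]; simp [← Complex.ofReal_pow]
    have hden : α * Real.sqrt (1 - α ^ 2) ≠ 0 := mul_ne_zero hα0 hs0
    have hden2 : (α * Real.sqrt (1 - α ^ 2)) ^ 2 = α ^ 2 * (1 - α ^ 2) := by
      rw [mul_pow, hs]
    refine ⟨-b.im / (α * Real.sqrt (1 - α ^ 2)), ?_, ?_⟩
    · have ht2 : (-b.im / (α * Real.sqrt (1 - α ^ 2))) ^ 2 ≤ 1 := by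
        rw [div_pow, div_le_one (by positivity : (0:ℝ) < (α * Real.sqrt (1 - α ^ 2)) ^ 2), hden2]
        nlinarith
      exact abs_le.mp ((sq_le_one_iff_abs_le_one _).mp ht2)
    · have hbI : b = Complex.I * (b.im : ℂ) := by
        apply Complex.ext <;> simp [hx0]
      have hzb : z = 1 - (α:ℂ) ^ 2 - b := by rw [hbdef]; ring
      have htval : (-b.im / (α * Real.sqrt (1 - α ^ 2))) * α * Real.sqrt (1 - α ^ 2)
          = -b.im := by field_simp
      have hrw : Complex.I * ((-b.im / (α * Real.sqrt (1 - α ^ 2)) : ℝ) : ℂ) * (α:ℂ)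
              * ((Real.sqrt (1 - α ^ 2) : ℝ) : ℂ)
            = -(Complex.I * (b.im : ℂ)) := by
        rw [show Complex.I * ((-b.im / (α * Real.sqrt (1 - α ^ 2)) : ℝ) : ℂ) * (α:ℂ)
              * ((Real.sqrt (1 - α ^ 2) : ℝ) : ℂ)
            = Complex.I * (((-b.im / (α * Real.sqrt (1 - α ^ 2))) * α
              * Real.sqrt (1 - α ^ 2) : ℝ) : ℂ) by push_cast; ring, htval]
        push_cast
        ring
      rw [hrw]
      linear_combination hzb - hbI
  · rintro ⟨t, ⟨ht1, ht2⟩, hz⟩ κ₁ κ₂ hk1 hk2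
    set m : ℝ := t * α * Real.sqrt (1 - α ^ 2) with hmdef
    have hbm : b = -(Complex.I * m) := by
      rw [hbdef, hz, hmdef]; push_cast; ring
    set D : ℝ := Real.sqrt ((1 - t ^ 2) * (α ^ 2 * (1 - α ^ 2))) with hDdef
    have hD2 : D ^ 2 = (1 - t ^ 2) * (α ^ 2 * (1 - α ^ 2)) := by
      rw [hDdef]; apply Real.sq_sqrt
      have h1 : (0:ℝ) ≤ 1 - t ^ 2 := by nlinarith
      have h2 : (0:ℝ) ≤ α ^ 2 * (1 - α ^ 2) := by positivity
      exact mul_nonneg h1 h2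
    have hm2 : m ^ 2 = t ^ 2 * (α ^ 2 * (1 - α ^ 2)) := by
      rw [hmdef, mul_pow, mul_pow, hs]; ring
    have hreal : -(m ^ 2) - 4 * (A * C) = D ^ 2 := by
      rw [hm2, hD2, hAC]; ring
    have hdisc : b ^ 2 - 4 * (A:ℂ) * (C:ℂ) = (D:ℂ) ^ 2 := by
      rw [hbm, show ((D:ℂ)) ^ 2 = ((D ^ 2 : ℝ) : ℂ) by push_cast; ring, ← hreal]
      push_cast
      linear_combination (m:ℂ) ^ 2 * Complex.I_sq
    have key : ∀ κ : ℂ, (A:ℂ) * κ ^ 2 + b * κ + (C:ℂ) = 0 →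
        Complex.normSq κ = (D ^ 2 + m ^ 2) / (2 * A) ^ 2 := by
      intro κ hk
      have h1 : (2 * (A:ℂ) * κ + b - (D:ℂ)) * (2 * (A:ℂ) * κ + b + (D:ℂ)) = 0 := by
        linear_combination 4 * (A:ℂ) * hk + hdisc
      have h2Ar : ((2 * A : ℝ) : ℂ) = 2 * (A:ℂ) := by push_cast; ring
      rcases mul_eq_zero.mp h1 with h' | h'
      · have hκ : κ = ((D:ℂ) + (m:ℂ) * Complex.I) / (2 * (A:ℂ)) := by
          rw [eq_div_iff h2A]
          rw [hbm] at h'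
          linear_combination h'
        rw [hκ, ← h2Ar, Complex.normSq_div, Complex.normSq_add_mul_I, Complex.normSq_ofReal]
        ring
      · have hκ : κ = (((-D : ℝ):ℂ) + (m:ℂ) * Complex.I) / (2 * (A:ℂ)) := by
          rw [eq_div_iff h2A]
          rw [hbm] at h'
          push_cast
          linear_combination h'
        rw [hκ, ← h2Ar, Complex.normSq_div, Complex.normSq_add_mul_I, Complex.normSq_ofReal]
        ring
    rw [Complex.norm_def, Complex.norm_def, key κ₁ hk1, key κ₂ hk2]
end

section
/- Let α_ℓ ∈ (0,1), α_r ∈ (-1,0), and α_m ∈ [α_r, α_ℓ]. Define β := (1-α_m²)·[(α_ℓ-α_r)² - (α_m(α_ℓ+α_r) - 2α_ℓα_r)²]. Then β > 0. -/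
/-- Positivity of the coefficient `β` in the quartic equation for the zeros of
the Lopatinskii determinant. -/
theorem stmt_4 (αl αr αm : ℝ) (hl : αl ∈ Set.Ioo (0 : ℝ) 1)
    (hr : αr ∈ Set.Ioo (-1 : ℝ) 0) (hm : αm ∈ Set.Icc αr αl) :
    0 < (1 - αm ^ 2) * ((αl - αr) ^ 2 - (αm * (αl + αr) - 2 * αl * αr) ^ 2) := by
  obtain ⟨hl0, hl1⟩ := hl
  obtain ⟨hr0, hr1⟩ := hr
  obtain ⟨hm1, hm2⟩ := hm
  have h1 : 0 < 1 - αm ^ 2 := by nlinarith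
  have h2 : 0 < (αl - αr) ^ 2 - (αm * (αl + αr) - 2 * αl * αr) ^ 2 := by
    have hub : αm * (αl + αr) - 2 * αl * αr < αl - αr := by
      rcases le_or_gt 0 (αl + αr) with hs | hs
      · nlinarith [mul_le_mul_of_nonneg_right hm2 hs]
      · nlinarith [mul_le_mul_of_nonpos_right hm1 hs.le]
    have hlb : -(αl - αr) < αm * (αl + αr) - 2 * αl * αr := by
      rcases le_or_gt 0 (αl + αr) with hs | hs
      · nlinarith [mul_le_mul_of_nonneg_right hm1 hs]
      · nlinarith [mul_le_mul_of_nonpos_right hm2 hs.le]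
    nlinarith [sq_lt_sq' hlb hub]
  exact mul_pos h1 h2
end

section
/- Let α_ℓ ∈ (0,1), α_r ∈ (-1,0), α_m ∈ [α_r, α_ℓ], and Z ≥ 0. Define D(α_m, Z) := α_m(α_ℓ+α_r) + 2α_ℓ|α_r| + √(Z² + 2α_ℓ²Z + α_ℓ²) + √(Z² + 2α_r²Z + α_r²) + (Z + α_mα_r)·(Z+α_ℓ²)/√(Z² + 2α_ℓ²Z + α_ℓ²) + (Z + α_mα_ℓ)·(Z+α_r²)/√(Z² + 2α_r²Z + α_r²). Then D(α_m, Z) ≥ α_ℓ + |α_r| > 0. -/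
private lemma le_of_sq_le_sq'' (x y : ℝ) (hy : 0 ≤ y) (h : x ^ 2 ≤ y ^ 2) : x ≤ y := by
  have h1 := Real.sqrt_le_sqrt h
  rw [Real.sqrt_sq_eq_abs, Real.sqrt_sq hy] at h1
  exact (le_abs_self x).trans h1

set_option maxHeartbeats 800000 in
/-- Lower bound `D(α_m, Z) ≥ α_ℓ + |α_r| > 0` for the quantity controlling
`α_ℓ α_r Δ'(z)` on the half-line `z ≥ 1`. -/
theorem stmt_6 (αl αr αm Z : ℝ) (hl : αl ∈ Set.Ioo (0 : ℝ) 1)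
    (hr : αr ∈ Set.Ioo (-1 : ℝ) 0) (hm : αm ∈ Set.Icc αr αl) (hZ : 0 ≤ Z) :
    αl + |αr| ≤
      αm * (αl + αr) + 2 * αl * |αr|
        + Real.sqrt (Z ^ 2 + 2 * αl ^ 2 * Z + αl ^ 2)
        + Real.sqrt (Z ^ 2 + 2 * αr ^ 2 * Z + αr ^ 2)
        + (Z + αm * αr) * (Z + αl ^ 2) / Real.sqrt (Z ^ 2 + 2 * αl ^ 2 * Z + αl ^ 2)
        + (Z + αm * αl) * (Z + αr ^ 2) / Real.sqrt (Z ^ 2 + 2 * αr ^ 2 * Z + αr ^ 2)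
    ∧ 0 < αl + |αr| := by
  obtain ⟨hl0, hl1⟩ := hl
  obtain ⟨hr1, hr0⟩ := hr
  obtain ⟨hmr, hml⟩ := hm
  have habs : |αr| = -αr := abs_of_neg hr0
  have hl2 : αl ^ 2 ≤ 1 := by nlinarith
  have hr2 : αr ^ 2 ≤ 1 := by nlinarith
  constructor
  · rw [habs]
    set Sl := Real.sqrt (Z ^ 2 + 2 * αl ^ 2 * Z + αl ^ 2) with hSl
    set Sr := Real.sqrt (Z ^ 2 + 2 * αr ^ 2 * Z + αr ^ 2) with hSr
    have hargl : (0:ℝ) < Z ^ 2 + 2 * αl ^ 2 * Z + αl ^ 2 := by nlinarith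
    have hargr : (0:ℝ) < Z ^ 2 + 2 * αr ^ 2 * Z + αr ^ 2 := by nlinarith
    have hSl0 : 0 < Sl := Real.sqrt_pos.mpr hargl
    have hSr0 : 0 < Sr := Real.sqrt_pos.mpr hargr
    have hSl2 : Sl ^ 2 = Z ^ 2 + 2 * αl ^ 2 * Z + αl ^ 2 := Real.sq_sqrt hargl.le
    have hSr2 : Sr ^ 2 = Z ^ 2 + 2 * αr ^ 2 * Z + αr ^ 2 := Real.sq_sqrt hargr.le
    -- Sl ≥ αl, Sr ≥ -αr
    have hSla : αl ≤ Sl := le_of_sq_le_sq'' _ _ hSl0.le (by rw [hSl2]; nlinarith [sq_nonneg Z, mul_nonneg (mul_nonneg hZ hl0.le) hl0.le])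
    have hSra : -αr ≤ Sr := le_of_sq_le_sq'' _ _ hSr0.le (by rw [hSr2]; nlinarith [sq_nonneg Z, mul_nonneg hZ (sq_nonneg αr)])
    -- Z + αl² ≤ Sl, Z + αr² ≤ Sr
    have hSlb : Z + αl ^ 2 ≤ Sl := le_of_sq_le_sq'' _ _ hSl0.le (by rw [hSl2]; nlinarith [mul_nonneg (sq_nonneg αl) (by linarith : (0:ℝ) ≤ 1 - αl ^ 2)])
    have hSrb : Z + αr ^ 2 ≤ Sr := le_of_sq_le_sq'' _ _ hSr0.le (by rw [hSr2]; nlinarith [mul_nonneg (sq_nonneg αr) (by linarith : (0:ℝ) ≤ 1 - αr ^ 2)])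
    set a := (Z + αl ^ 2) / Sl with ha
    set b := (Z + αr ^ 2) / Sr with hb
    have ha1 : a ≤ 1 := by rw [ha, div_le_one hSl0]; linarith
    have hb1 : b ≤ 1 := by rw [hb, div_le_one hSr0]; linarith
    have ha0 : αl ≤ a := by
      rw [ha, le_div_iff₀ hSl0]
      have hkey : (αl * Sl) ^ 2 ≤ (Z + αl ^ 2) ^ 2 := by
        rw [mul_pow, hSl2]
        nlinarith [mul_nonneg (sq_nonneg Z) (show (0:ℝ) ≤ 1 - αl ^ 2 by linarith),
          mul_nonneg (mul_nonneg hZ (sq_nonneg αl)) (show (0:ℝ) ≤ 1 - αl ^ 2 by linarith)]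
      exact le_of_sq_le_sq'' _ _ (by nlinarith) hkey
    have hb0 : -αr ≤ b := by
      rw [hb, le_div_iff₀ hSr0]
      have hkey : (-αr * Sr) ^ 2 ≤ (Z + αr ^ 2) ^ 2 := by
        rw [mul_pow, hSr2]
        nlinarith [mul_nonneg (sq_nonneg Z) (show (0:ℝ) ≤ 1 - αr ^ 2 by linarith),
          mul_nonneg (mul_nonneg hZ (sq_nonneg αr)) (show (0:ℝ) ≤ 1 - αr ^ 2 by linarith)]
      exact le_of_sq_le_sq'' _ _ (by nlinarith) hkey
    have ha' : (0:ℝ) ≤ a := by linarith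
    have hb' : (0:ℝ) ≤ b := by linarith
    have hrw1 : (Z + αm * αr) * (Z + αl ^ 2) / Sl = (Z + αm * αr) * a := by rw [ha]; ring
    have hrw2 : (Z + αm * αl) * (Z + αr ^ 2) / Sr = (Z + αm * αl) * b := by rw [hb]; ring
    rw [hrw1, hrw2]
    -- E(αl) ≥ 0 and E(αr) ≥ 0
    have hEl : 0 ≤ αl * (αl + αr) - 2 * αl * αr + (Z + αl * αr) * a + (Z + αl * αl) * b := by
      have h1 : 0 ≤ Z * a := mul_nonneg hZ ha'
      have h2 : 0 ≤ Z * b := mul_nonneg hZ hb'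
      have h3 : 0 ≤ αl ^ 2 * b := mul_nonneg (sq_nonneg αl) hb'
      have h4 : 0 ≤ (αl * -αr) * (1 - a) :=
        mul_nonneg (mul_nonneg hl0.le (by linarith)) (by linarith)
      nlinarith [h1, h2, h3, h4, sq_nonneg αl]
    have hEr : 0 ≤ αr * (αl + αr) - 2 * αl * αr + (Z + αr * αr) * a + (Z + αr * αl) * b := by
      have h1 : 0 ≤ Z * a := mul_nonneg hZ ha'
      have h2 : 0 ≤ Z * b := mul_nonneg hZ hb'
      have h3 : 0 ≤ αr ^ 2 * a := mul_nonneg (sq_nonneg αr) ha'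
      have h4 : 0 ≤ (αl * -αr) * (1 - b) :=
        mul_nonneg (mul_nonneg hl0.le (by linarith)) (by linarith)
      nlinarith [h1, h2, h3, h4, sq_nonneg αr]
    -- combine: the bracket is affine in αm
    have hcomb : 0 ≤ αm * (αl + αr) - 2 * αl * αr + (Z + αm * αr) * a + (Z + αm * αl) * b := by
      have hsum : 0 ≤ (αm - αr) * (αl * (αl + αr) - 2 * αl * αr + (Z + αl * αr) * a + (Z + αl * αl) * b)
          + (αl - αm) * (αr * (αl + αr) - 2 * αl * αr + (Z + αr * αr) * a + (Z + αr * αl) * b) :=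
        add_nonneg (mul_nonneg (by linarith) hEl) (mul_nonneg (by linarith) hEr)
      have hid : (αl - αr) * (αm * (αl + αr) - 2 * αl * αr + (Z + αm * αr) * a + (Z + αm * αl) * b)
          = (αm - αr) * (αl * (αl + αr) - 2 * αl * αr + (Z + αl * αr) * a + (Z + αl * αl) * b)
          + (αl - αm) * (αr * (αl + αr) - 2 * αl * αr + (Z + αr * αr) * a + (Z + αr * αl) * b) := by
        ring
      have hpos : (0:ℝ) < αl - αr := by linarith
      nlinarith [hsum, hid, hpos]
    linarith [hSla, hSra, hcomb]
  · rw [habs]; linarith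
end

section
/- Let α_ℓ ∈ (0,1), α_r ∈ (-1,0), α := max(α_ℓ, |α_r|), α_m ∈ [α_r, α_ℓ], and Z ≤ -2α². Then 𝔻(α_r, Z) := Z² + α_r²Z + α_ℓα_rZ + (|Z| - α_r²)√(Z² + 2α_ℓ²Z + α_ℓ²) + (|Z| + α_ℓ|α_r|)√(Z² + 2α_r²Z + α_r²) + √(Z² + 2α_ℓ²Z + α_ℓ²)·√(Z² + 2α_r²Z + α_r²) - α_ℓ|α_r| satisfies 𝔻(α_r, Z) ≥ 2α⁴ > 0. -/
lemma stmt_8_aux (a b t A : ℝ) (ha0 : 0 < a) (hb0 : 0 < b) (haA : a ≤ A)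
    (hbA : b ≤ A) (ht : 2 * A ^ 2 ≤ t) (hA1 : A ≤ 1) :
    2 * A ^ 4 ≤ t ^ 2 - b ^ 2 * t + a * b * t + (t - b ^ 2) * (t - a ^ 2)
      + (t + a * b) * (t - b ^ 2) := by
  have hA0 : 0 < A := lt_of_lt_of_le ha0 haA
  have ht0 : 0 < t := by nlinarith
  have h1 : 0 ≤ (t - 2 * A ^ 2) * (3 * t + 2 * A ^ 2) := by
    apply mul_nonneg <;> nlinarith
  have h2 : a * b ^ 3 ≤ A ^ 4 := by
    calc a * b ^ 3 ≤ A * A ^ 3 := by gcongr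
    _ = A ^ 4 := by ring
  have h3 : 0 ≤ (A ^ 2 - a ^ 2) * t := by
    apply mul_nonneg; nlinarith; linarith
  have h4 : 0 ≤ (A ^ 2 - b ^ 2) * t := by
    apply mul_nonneg; nlinarith; linarith
  nlinarith [mul_nonneg (mul_nonneg ha0.le hb0.le) ht0.le, sq_nonneg (a * b)]

set_option maxHeartbeats 1000000 in
/-- Lower bound `𝔻(α_r, Z) ≥ 2α⁴ > 0` for `Z ≤ -2α²`, showing the Lopatinskii
determinant has no zeros on `(-∞, 1 - 2α²]`. -/
theorem stmt_8 (αl αr αm Z : ℝ) (hl : αl ∈ Set.Ioo (0 : ℝ) 1)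
    (hr : αr ∈ Set.Ioo (-1 : ℝ) 0) (hm : αm ∈ Set.Icc αr αl)
    (hZ : Z ≤ -2 * (max αl |αr|) ^ 2) :
    2 * (max αl |αr|) ^ 4 ≤
      Z ^ 2 + αr ^ 2 * Z + αl * αr * Z
        + (|Z| - αr ^ 2) * Real.sqrt (Z ^ 2 + 2 * αl ^ 2 * Z + αl ^ 2)
        + (|Z| + αl * |αr|) * Real.sqrt (Z ^ 2 + 2 * αr ^ 2 * Z + αr ^ 2)
        + Real.sqrt (Z ^ 2 + 2 * αl ^ 2 * Z + αl ^ 2)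
          * Real.sqrt (Z ^ 2 + 2 * αr ^ 2 * Z + αr ^ 2)
        - αl * |αr|
    ∧ 0 < 2 * (max αl |αr|) ^ 4 := by
  obtain ⟨ha0, ha1⟩ := hl
  obtain ⟨hb0, hb1⟩ := hr
  have habs : |αr| = -αr := abs_of_neg hb1
  set A : ℝ := max αl |αr| with hA
  have haA : αl ≤ A := le_max_left _ _
  have hbA' : -αr ≤ A := habs ▸ le_max_right _ _
  have hApos : 0 < A := lt_of_lt_of_le ha0 haA
  have hA1 : A < 1 := max_lt ha1 (by rw [habs]; linarith)
  have hA2a : αl ^ 2 ≤ A ^ 2 := by nlinarith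
  have hA2b : αr ^ 2 ≤ A ^ 2 := by nlinarith
  have hZ2a : Z ≤ -2 * αl ^ 2 := by linarith
  have hZ2b : Z ≤ -2 * αr ^ 2 := by linarith
  have hZ0 : Z < 0 := by nlinarith
  have hZabs : |Z| = -Z := abs_of_neg hZ0
  set Sa : ℝ := Real.sqrt (Z ^ 2 + 2 * αl ^ 2 * Z + αl ^ 2) with hSadef
  set Sb : ℝ := Real.sqrt (Z ^ 2 + 2 * αr ^ 2 * Z + αr ^ 2) with hSbdef
  have hSa0 : 0 ≤ Sa := Real.sqrt_nonneg _
  have hSb0 : 0 ≤ Sb := Real.sqrt_nonneg _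
  have hta : 0 ≤ -Z - αl ^ 2 := by nlinarith [sq_nonneg αl]
  have htb : 0 ≤ -Z - αr ^ 2 := by nlinarith [sq_nonneg αr]
  have hSa1 : -Z - αl ^ 2 ≤ Sa := by
    have h := Real.sqrt_le_sqrt (show (-Z - αl ^ 2) ^ 2 ≤ Z ^ 2 + 2 * αl ^ 2 * Z + αl ^ 2 by
      nlinarith [mul_nonneg (sq_nonneg αl) (show (0:ℝ) ≤ 1 - αl ^ 2 by nlinarith)])
    rwa [Real.sqrt_sq hta] at h
  have hSb1 : -Z - αr ^ 2 ≤ Sb := by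
    have h := Real.sqrt_le_sqrt (show (-Z - αr ^ 2) ^ 2 ≤ Z ^ 2 + 2 * αr ^ 2 * Z + αr ^ 2 by
      nlinarith [mul_nonneg (sq_nonneg αr) (show (0:ℝ) ≤ 1 - αr ^ 2 by nlinarith)])
    rwa [Real.sqrt_sq htb] at h
  have hSa2 : αl ≤ Sa := by
    have h := Real.sqrt_le_sqrt (show αl ^ 2 ≤ Z ^ 2 + 2 * αl ^ 2 * Z + αl ^ 2 by
      nlinarith [mul_nonneg (show (0:ℝ) ≤ -Z by linarith) (show 0 ≤ -Z - 2 * αl ^ 2 by linarith)])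
    rwa [Real.sqrt_sq ha0.le] at h
  have hSb2 : -αr ≤ Sb := by
    have h := Real.sqrt_le_sqrt (show (-αr) ^ 2 ≤ Z ^ 2 + 2 * αr ^ 2 * Z + αr ^ 2 by
      nlinarith [mul_nonneg (show (0:ℝ) ≤ -Z by linarith) (show 0 ≤ -Z - 2 * αr ^ 2 by linarith)])
    rwa [Real.sqrt_sq (by linarith)] at h
  constructor
  · rw [hZabs, habs]
    have hc1 : 0 ≤ -Z - αr ^ 2 := htb
    have hc2 : 0 ≤ -Z + αl * (-αr) := by nlinarith
    have key1 : (-Z - αr ^ 2) * (-Z - αl ^ 2) ≤ (-Z - αr ^ 2) * Sa :=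
      mul_le_mul_of_nonneg_left hSa1 hc1
    have key2 : (-Z + αl * (-αr)) * (-Z - αr ^ 2) ≤ (-Z + αl * (-αr)) * Sb :=
      mul_le_mul_of_nonneg_left hSb1 hc2
    have key3 : αl * (-αr) ≤ Sa * Sb :=
      mul_le_mul hSa2 hSb2 (by linarith) hSa0
    have haux := stmt_8_aux αl (-αr) (-Z) A ha0 (by linarith) haA hbA' (by linarith) hA1.le
    nlinarith [key1, key2, key3, haux]
  · positivity
end

section
/- In the symmetric case α_r = -α_ℓ with α_ℓ ∈ (0,1): for any z in the resolvent region where κ_ℓ(z) is the root of (α_ℓ(α_ℓ-1)/2)κ² + (1-α_ℓ²-z)κ + (α_ℓ(α_ℓ+1)/2) = 0 with |κ_ℓ(z)| > 1, the Lopatinskii determinant Δ(z) = 1 - α_m² + (α_ℓ - α_m + (1-α_ℓ)κ_ℓ(z))·(α_r - α_m - (1+α_r)/κ_r(z)), with κ_r(z) = 1/κ_ℓ(z), factorizes as Δ(z) = (1-α_ℓ)(1-κ_ℓ(z))(1+α_ℓ+(1-α_ℓ)κ_ℓ(z)), independently of α_m. -/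
/-- In the symmetric case `α_r = -α_ℓ` with `κ_r(z) = 1/κ_ℓ(z)`, the Lopatinskii
determinant factorizes as `(1-α_ℓ)(1-κ_ℓ)(1+α_ℓ+(1-α_ℓ)κ_ℓ)`, independently of `α_m`. -/
theorem stmt_9 (αl αm : ℝ) (hl : αl ∈ Set.Ioo (0 : ℝ) 1) (z κl : ℂ)
    (hroot : ((αl * (αl - 1) / 2 : ℝ) : ℂ) * κl ^ 2 + (1 - (αl : ℂ) ^ 2 - z) * κl
      + ((αl * (αl + 1) / 2 : ℝ) : ℂ) = 0)
    (hmod : 1 < ‖κl‖) :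
    1 - (αm : ℂ) ^ 2
      + ((αl : ℂ) - (αm : ℂ) + (1 - (αl : ℂ)) * κl)
        * (((-αl : ℝ) : ℂ) - (αm : ℂ) - (1 + ((-αl : ℝ) : ℂ)) / κl⁻¹)
    = (1 - (αl : ℂ)) * (1 - κl) * (1 + (αl : ℂ) + (1 - (αl : ℂ)) * κl) := by
  rw [div_inv_eq_mul]
  push_cast
  ring
end

section
/- In the symmetric case α_r = -α_ℓ, α_ℓ ∈ (0,1): if |z| > 1, then Δ(z) := (1-α_ℓ)(1-κ_ℓ(z))(1+α_ℓ+(1-α_ℓ)κ_ℓ(z)) ≠ 0, where κ_ℓ(z) is the root of modulus > 1 of (α_ℓ(α_ℓ-1)/2)κ² + (1-α_ℓ²-z)κ + (α_ℓ(α_ℓ+1)/2) = 0. -/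
/-- In the symmetric case, the factorized Lopatinskii determinant does not vanish
for `|z| > 1`. -/
theorem stmt_10 (αl : ℝ) (hl : αl ∈ Set.Ioo (0 : ℝ) 1) (z κl : ℂ)
    (hroot : ((αl * (αl - 1) / 2 : ℝ) : ℂ) * κl ^ 2 + (1 - (αl : ℂ) ^ 2 - z) * κl
      + ((αl * (αl + 1) / 2 : ℝ) : ℂ) = 0)
    (hmod : 1 < ‖κl‖) (hz : 1 < ‖z‖) :
    (1 - (αl : ℂ)) * (1 - κl) * (1 + (αl : ℂ) + (1 - (αl : ℂ)) * κl) ≠ 0 := by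
  obtain ⟨ha0, ha1⟩ := hl
  have hne1 : (1 : ℂ) - αl ≠ 0 := by
    intro h
    have : (αl : ℂ) = 1 := by linear_combination -h
    have : αl = 1 := by exact_mod_cast this
    linarith
  have hne2 : (1 : ℂ) + αl ≠ 0 := by
    intro h
    have : (αl : ℂ) = -1 := by linear_combination h
    have : αl = -1 := by exact_mod_cast this
    linarith
  intro h
  rcases mul_eq_zero.mp h with h12 | h3
  · rcases mul_eq_zero.mp h12 with h1 | h2
    · exact hne1 h1
    · have : κl = 1 := by linear_combination -h2
      rw [this] at hmod
      simp at hmod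
  · have hκ : κl = -(1 + (αl : ℂ)) / (1 - αl) := by
      field_simp
      linear_combination h3
    rw [hκ] at hroot
    push_cast at hroot
    have hz1 : z = 1 := by
      field_simp at hroot
      have key : (4 * (1 + (αl : ℂ)) * (1 - (αl : ℂ)) ^ 2) * (z - 1) = 0 := by
        linear_combination (2 * (1 - (αl : ℂ))) * hroot
      have h4 : (4 * (1 + (αl : ℂ)) * (1 - (αl : ℂ)) ^ 2) ≠ 0 := by
        exact mul_ne_zero (mul_ne_zero (by norm_num) hne2) (pow_ne_zero _ hne1)
      have := (mul_eq_zero.mp key).resolve_left h4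
      linear_combination this
    rw [hz1] at hz
    simp at hz
end

section
/- Let β₁ > 0 and define H(w) := e^{i β₁ w} ∫_{-1}^{1} e^{-3β₁ w u²} e^{β₁(1-i) w u³} du for w ≥ 0. Then there exists a constant C > 0, depending only on β₁, such that |∫_0^w H(w') dw'| ≤ C for all w ≥ 0. -/
open MeasureTheory intervalIntegral Set

noncomputable def phi13 (u : ℝ) : ℂ :=
  ((u ^ 3 - 3 * u ^ 2 : ℝ) : ℂ) + ((1 - u ^ 3 : ℝ) : ℂ) * Complex.I

lemma phi13_re (u : ℝ) : (phi13 u).re = u ^ 3 - 3 * u ^ 2 := by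
  simp [phi13, ← Complex.ofReal_pow]

lemma phi13_im (u : ℝ) : (phi13 u).im = 1 - u ^ 3 := by
  simp [phi13, ← Complex.ofReal_pow]

lemma phi13_cont : Continuous phi13 := by unfold phi13; fun_prop

lemma cube_le {u : ℝ} (h1 : -1 ≤ u) (h : u ≤ 1 / 2) : u ^ 3 ≤ 1 / 2 := by
  have h2 : u ^ 3 ≤ u ^ 2 / 2 := by nlinarith [sq_nonneg u]
  have h3 : u ^ 2 ≤ 1 := by nlinarith
  linarith

lemma phi13_norm {u : ℝ} (h1 : -1 ≤ u) (h2 : u ≤ 1) : (1 / 2 : ℝ) ≤ ‖phi13 u‖ := by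
  rcases le_or_gt u (1 / 2) with h | h
  · calc (1 / 2 : ℝ) ≤ |(phi13 u).im| := by
          rw [phi13_im, abs_of_nonneg (by linarith [cube_le h1 h])]
          linarith [cube_le h1 h]
      _ ≤ ‖phi13 u‖ := Complex.abs_im_le_norm _
  · have hu2 : (1 / 4 : ℝ) ≤ u ^ 2 := by nlinarith
    calc (1 / 2 : ℝ) ≤ |(phi13 u).re| := by
          rw [phi13_re, abs_of_nonpos (by nlinarith)]
          nlinarith
      _ ≤ ‖phi13 u‖ := Complex.abs_re_le_norm _

lemma phi13_ne {u : ℝ} (h1 : -1 ≤ u) (h2 : u ≤ 1) : phi13 u ≠ 0 := by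
  intro h
  have := phi13_norm h1 h2
  rw [h] at this
  simp at this
  linarith

lemma phi13_re_nonpos {u : ℝ} (h2 : u ≤ 1) : u ^ 3 - 3 * u ^ 2 ≤ 0 := by
  nlinarith [sq_nonneg u]

lemma exp_combine (β₁ w' u : ℝ) :
    Complex.exp (Complex.I * (β₁ : ℂ) * (w' : ℂ)) *
      (Complex.exp (((-3 * β₁ * w' * u ^ 2 : ℝ) : ℂ)) *
        Complex.exp (((β₁ * w' * u ^ 3 : ℝ) : ℂ) * (1 - Complex.I))) =
    Complex.exp ((β₁ : ℂ) * phi13 u * (w' : ℂ)) := by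
  rw [← Complex.exp_add, ← Complex.exp_add]
  congr 1
  unfold phi13
  push_cast
  ring

lemma exp_norm13 (β₁ w' u : ℝ) :
    ‖Complex.exp ((β₁ : ℂ) * phi13 u * (w' : ℂ))‖ =
      Real.exp (β₁ * (u ^ 3 - 3 * u ^ 2) * w') := by
  rw [Complex.norm_exp]
  congr 1
  simp [Complex.mul_re, Complex.mul_im, phi13_re, phi13_im]

lemma exponent_nonpos {β₁ u w' : ℝ} (hβ : 0 < β₁) (hu : u ≤ 1) (hw' : 0 ≤ w') :
    β₁ * (u ^ 3 - 3 * u ^ 2) * w' ≤ 0 := by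
  have h0 : 0 ≤ β₁ * (3 * u ^ 2 - u ^ 3) * w' :=
    mul_nonneg (mul_nonneg hβ.le (by linarith [phi13_re_nonpos hu])) hw'
  have : β₁ * (u ^ 3 - 3 * u ^ 2) * w' = -(β₁ * (3 * u ^ 2 - u ^ 3) * w') := by ring
  linarith

/-- Uniform bound for the primitive of
`H(w) = e^{iβ₁w} ∫_{-1}^1 e^{-3β₁wu²} e^{β₁(1-i)wu³} du`. -/
theorem stmt_13 (β₁ : ℝ) (hβ : 0 < β₁) :
    ∃ C > (0 : ℝ), ∀ w : ℝ, 0 ≤ w →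
      ‖∫ w' in (0 : ℝ)..w,
          Complex.exp (Complex.I * (β₁ : ℂ) * (w' : ℂ)) *
            ∫ u in (-1 : ℝ)..(1 : ℝ),
              Complex.exp (((-3 * β₁ * w' * u ^ 2 : ℝ) : ℂ)) *
                Complex.exp (((β₁ * w' * u ^ 3 : ℝ) : ℂ) * (1 - Complex.I))‖ ≤ C := by
  refine ⟨8 / β₁, by positivity, fun w hw => ?_⟩
  have h11 : (-1 : ℝ) ≤ 1 := by norm_num
  -- Step 1: combine exponentials
  have step1 : (∫ w' in (0 : ℝ)..w,
      Complex.exp (Complex.I * (β₁ : ℂ) * (w' : ℂ)) *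
        ∫ u in (-1 : ℝ)..(1 : ℝ),
          Complex.exp (((-3 * β₁ * w' * u ^ 2 : ℝ) : ℂ)) *
            Complex.exp (((β₁ * w' * u ^ 3 : ℝ) : ℂ) * (1 - Complex.I))) =
      ∫ w' in (0 : ℝ)..w, ∫ u in (-1 : ℝ)..(1 : ℝ),
        Complex.exp ((β₁ : ℂ) * phi13 u * (w' : ℂ)) := by
    refine intervalIntegral.integral_congr fun w' _ => ?_
    rw [← intervalIntegral.integral_const_mul]
    exact intervalIntegral.integral_congr fun u _ => exp_combine β₁ w' u
  rw [step1]
  -- Step 2: go to set integrals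
  rw [intervalIntegral.integral_of_le hw]
  simp only [intervalIntegral.integral_of_le h11]
  -- Step 3: Fubini
  set f : ℝ → ℝ → ℂ := fun w' u => Complex.exp ((β₁ : ℂ) * phi13 u * (w' : ℂ)) with hf
  have hcont : Continuous (Function.uncurry f) := by
    apply Complex.continuous_exp.comp
    exact (continuous_const.mul (phi13_cont.comp continuous_snd)).mul
      (Complex.continuous_ofReal.comp continuous_fst)
  have hmeas : MeasurableSet (Set.Ioc (0:ℝ) w ×ˢ Set.Ioc (-1:ℝ) 1) :=
    measurableSet_Ioc.prod measurableSet_Ioc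
  have hint : Integrable (Function.uncurry f)
      ((volume.restrict (Set.Ioc (0:ℝ) w)).prod (volume.restrict (Set.Ioc (-1:ℝ) 1))) := by
    refine Integrable.mono' (integrable_const 1) hcont.aestronglyMeasurable ?_
    rw [Measure.prod_restrict]
    refine (ae_restrict_mem hmeas).mono fun p hp => ?_
    obtain ⟨hp1, hp2⟩ := hp
    have : ‖f p.1 p.2‖ = Real.exp (β₁ * (p.2 ^ 3 - 3 * p.2 ^ 2) * p.1) := exp_norm13 _ _ _
    rw [Function.uncurry, this, Real.exp_le_one_iff]
    exact exponent_nonpos hβ hp2.2 hp1.1.le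
  rw [MeasureTheory.integral_integral_swap hint]
  -- Step 4: evaluate inner integral and bound
  have hvol : (volume (Set.Ioc (-1:ℝ) 1)).toReal = 2 := by
    rw [Real.volume_Ioc]; norm_num
  have key : ∀ u ∈ Set.Ioc (-1:ℝ) 1, ‖∫ w' in Set.Ioc (0:ℝ) w, f w' u‖ ≤ 4 / β₁ := by
    intro u hu
    have hne : (β₁ : ℂ) * phi13 u ≠ 0 :=
      mul_ne_zero (by exact_mod_cast hβ.ne') (phi13_ne hu.1.le hu.2)
    have heval : (∫ w' in Set.Ioc (0:ℝ) w, f w' u) =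
        (Complex.exp ((β₁ : ℂ) * phi13 u * w) - Complex.exp ((β₁ : ℂ) * phi13 u * 0)) /
          ((β₁ : ℂ) * phi13 u) := by
      rw [← intervalIntegral.integral_of_le hw]
      exact integral_exp_mul_complex hne
    rw [heval, norm_div]
    have hnum : ‖Complex.exp ((β₁ : ℂ) * phi13 u * (w:ℂ)) -
        Complex.exp ((β₁ : ℂ) * phi13 u * ((0:ℝ):ℂ))‖ ≤ 2 := by
      refine (norm_sub_le _ _).trans ?_
      have b1 : ‖Complex.exp ((β₁ : ℂ) * phi13 u * (w:ℂ))‖ ≤ 1 := by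
        rw [exp_norm13, Real.exp_le_one_iff]
        exact exponent_nonpos hβ hu.2 hw
      have b2 : ‖Complex.exp ((β₁ : ℂ) * phi13 u * ((0:ℝ):ℂ))‖ ≤ 1 := by
        rw [exp_norm13, Real.exp_le_one_iff]
        exact exponent_nonpos hβ hu.2 le_rfl
      linarith
    have hnum' : ‖Complex.exp ((β₁ : ℂ) * phi13 u * w) -
        Complex.exp ((β₁ : ℂ) * phi13 u * 0)‖ ≤ 2 := by
      have : ((0:ℝ):ℂ) = (0:ℂ) := by norm_num
      rw [← this]
      exact hnum
    have hden : β₁ / 2 ≤ ‖(β₁ : ℂ) * phi13 u‖ := by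
      rw [norm_mul, Complex.norm_real, Real.norm_of_nonneg hβ.le]
      have h0 := phi13_norm hu.1.le hu.2
      calc β₁ / 2 = β₁ * (1/2) := by ring
        _ ≤ β₁ * ‖phi13 u‖ := by nlinarith
    calc ‖Complex.exp ((β₁ : ℂ) * phi13 u * w) - Complex.exp ((β₁ : ℂ) * phi13 u * 0)‖ /
          ‖(β₁ : ℂ) * phi13 u‖ ≤ 2 / (β₁ / 2) :=
          div_le_div₀ (by norm_num) hnum' (by positivity) hden
      _ = 4 / β₁ := by field_simp; norm_num
  calc ‖∫ u in Set.Ioc (-1:ℝ) 1, ∫ w' in Set.Ioc (0:ℝ) w, f w' u‖ ≤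
        (4 / β₁) * (volume (Set.Ioc (-1:ℝ) 1)).toReal :=
        norm_setIntegral_le_of_norm_le_const_ae'
          (by rw [Real.volume_Ioc]; exact ENNReal.ofReal_lt_top)
          (Filter.Eventually.of_forall key)
    _ = 8 / β₁ := by rw [hvol]; ring
end

section
/- Fix c₃ ≠ 0 and c₄ > 0 and define G(x,y) := (1/(2π)) ∫_ℝ e^{i x θ} e^{i c₃ y θ³} e^{-c₄ y θ⁴} dθ for x ∈ ℝ, y > 0. Then there exists C > 0 such that for all y > 0 and all x ∈ ℝ, |G(x,y)| ≤ C·y^{-1/3}. -/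
open MeasureTheory intervalIntegral Set

noncomputable def osc (a b : ℝ) (θ : ℝ) : ℂ :=
  Complex.exp (Complex.I * ((a * θ + b * θ ^ 3 : ℝ) : ℂ))

lemma osc_norm (a b θ : ℝ) : ‖osc a b θ‖ = 1 := by
  rw [osc, Complex.norm_exp]
  simp [Complex.mul_re, ← Complex.ofReal_pow]

lemma osc_cont (a b : ℝ) : Continuous (osc a b) := by
  unfold osc; fun_prop

lemma osc_hasDerivAt (a b θ : ℝ) :
    HasDerivAt (osc a b) (Complex.I * ((a + 3 * b * θ ^ 2 : ℝ) : ℂ) * osc a b θ) θ := by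
  have h1 : HasDerivAt (fun θ : ℝ => (a * θ + b * θ ^ 3 : ℝ)) (a + 3 * b * θ ^ 2) θ := by
    have := ((hasDerivAt_id θ).const_mul a).add
      (((hasDerivAt_pow 3 θ)).const_mul b)
    exact this.congr_deriv (by ring)
  have h2 : HasDerivAt (fun θ : ℝ => ((a * θ + b * θ ^ 3 : ℝ) : ℂ))
      ((a + 3 * b * θ ^ 2 : ℝ) : ℂ) θ := h1.ofReal_comp
  have h3 := (h2.const_mul Complex.I).cexp
  refine h3.congr_deriv ?_
  rw [show osc a b θ = Complex.exp (Complex.I * ((a * θ + b * θ ^ 3 : ℝ) : ℂ)) from rfl]; ring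

lemma p_hasDerivAt (a b θ : ℝ) :
    HasDerivAt (fun θ : ℝ => a + 3 * b * θ ^ 2) (6 * b * θ) θ := by
  have := ((hasDerivAt_pow 2 θ).const_mul (3 * b)).const_add a
  exact this.congr_deriv (by ring)

lemma osc_abs (a b θ : ℝ) : ‖osc a b θ‖ = 1 := by
  have := osc_norm a b θ; exact this

lemma nonstat (a b s t lam : ℝ) (hb : 0 < b) (hs : 0 ≤ s) (hst : s ≤ t) (hlam : 0 < lam)
    (h : ∀ θ ∈ Icc s t, lam ≤ |a + 3 * b * θ ^ 2|) :
    ‖∫ θ in s..t, osc a b θ‖ ≤ 4 / lam := by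
  set p : ℝ → ℝ := fun θ => a + 3 * b * θ ^ 2 with hp
  have hne : ∀ θ ∈ Icc s t, p θ ≠ 0 := by
    intro θ hθ h0
    have := h θ hθ
    rw [show a + 3 * b * θ ^ 2 = p θ from rfl, h0] at this
    simp at this; linarith
  set F : ℝ → ℂ := fun θ => osc a b θ * (-Complex.I) * (((p θ)⁻¹ : ℝ) : ℂ) with hF
  set r : ℝ → ℂ := fun θ =>
    -(Complex.I * osc a b θ * ((6 * b * θ / (p θ) ^ 2 : ℝ) : ℂ)) with hr
  have hderF : ∀ θ ∈ Icc s t, HasDerivAt F (osc a b θ - r θ) θ := by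
    intro θ hθ
    have hpθ : p θ ≠ 0 := hne θ hθ
    have hq : HasDerivAt (fun θ : ℝ => (((p θ)⁻¹ : ℝ) : ℂ))
        (((-(6 * b * θ) / (p θ) ^ 2 : ℝ) : ℂ)) θ :=
      ((p_hasDerivAt a b θ).inv hpθ).ofReal_comp
    have hd := ((osc_hasDerivAt a b θ).mul_const (-Complex.I)).mul hq
    refine hd.congr_deriv ?_; symm
    rw [hr]
    simp only [hp]
    have hPQ : ((a + 3 * b * θ ^ 2 : ℝ) : ℂ) * (((a + 3 * b * θ ^ 2)⁻¹ : ℝ) : ℂ) = 1 := by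
      rw [← Complex.ofReal_mul, mul_inv_cancel₀ hpθ, Complex.ofReal_one]
    have hG : ((-(6 * b * θ) / (a + 3 * b * θ ^ 2) ^ 2 : ℝ) : ℂ)
        = -((6 * b * θ / (a + 3 * b * θ ^ 2) ^ 2 : ℝ) : ℂ) := by
      push_cast; ring
    rw [hG]
    linear_combination (-(osc a b θ)) * hPQ +
      (osc a b θ * ((a + 3 * b * θ ^ 2 : ℝ) : ℂ) * (((a + 3 * b * θ ^ 2)⁻¹ : ℝ) : ℂ)) *
        Complex.I_mul_I
  have hcont_r : ContinuousOn r (Icc s t) := by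
    apply ContinuousOn.neg
    apply ContinuousOn.mul (ContinuousOn.mul continuousOn_const (osc_cont a b).continuousOn)
    apply Complex.continuous_ofReal.comp_continuousOn
    apply ContinuousOn.div (by fun_prop) (by fun_prop)
    intro θ hθ; exact pow_ne_zero 2 (hne θ hθ)
  have hint_r : IntervalIntegrable r volume s t := by
    apply ContinuousOn.intervalIntegrable
    rwa [uIcc_of_le hst]
  have hint_osc : IntervalIntegrable (osc a b) volume s t :=
    (osc_cont a b).intervalIntegrable s t
  have key : ∫ θ in s..t, (osc a b θ - r θ) = F t - F s := by
    apply integral_eq_sub_of_hasDerivAt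
    · intro θ hθ; exact hderF θ (by rwa [uIcc_of_le hst] at hθ)
    · exact hint_osc.sub hint_r
  have split : (∫ θ in s..t, osc a b θ) = (F t - F s) + ∫ θ in s..t, r θ := by
    rw [← key, integral_sub hint_osc hint_r]; ring
  have normF : ∀ θ, lam ≤ |p θ| → ‖F θ‖ ≤ 1 / lam := by
    intro θ hle
    rw [hF]
    simp only [norm_mul, osc_abs, norm_neg, Complex.norm_I,
      Complex.norm_real, Real.norm_eq_abs, one_mul, mul_one, abs_inv]
    rw [one_div]
    exact inv_anti₀ hlam hle
  have hFt : ‖F t‖ ≤ 1 / lam := normF t (h t ⟨hst, le_refl t⟩)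
  have hFs : ‖F s‖ ≤ 1 / lam := normF s (h s ⟨le_refl s, hst⟩)
  have hrint : ‖∫ θ in s..t, r θ‖ ≤ 2 / lam := by
    have h1 : ‖∫ θ in s..t, r θ‖ ≤ ∫ θ in s..t, ‖r θ‖ :=
      intervalIntegral.norm_integral_le_integral_norm hst
    have h2 : EqOn (fun θ => ‖r θ‖) (fun θ => 6 * b * θ / (p θ) ^ 2) (uIcc s t) := by
      intro θ hθ
      rw [uIcc_of_le hst] at hθ
      have hθ0 : 0 ≤ θ := le_trans hs hθ.1
      simp only [hr, norm_neg, norm_mul, osc_abs, Complex.norm_I,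
        Complex.norm_real, Real.norm_eq_abs, one_mul, mul_one]
      rw [abs_of_nonneg (by positivity : (0:ℝ) ≤ 6 * b * θ / (p θ) ^ 2)]
    have h3 : (∫ θ in s..t, 6 * b * θ / (p θ) ^ 2) = (p s)⁻¹ - (p t)⁻¹ := by
      have hd : ∀ θ ∈ uIcc s t, HasDerivAt (fun θ => -(p θ)⁻¹) (6 * b * θ / (p θ) ^ 2) θ := by
        intro θ hθ
        rw [uIcc_of_le hst] at hθ
        have := ((p_hasDerivAt a b θ).inv (hne θ hθ)).neg
        refine this.congr_deriv ?_; symm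
        simp only [hp]
        field_simp
      have hci : IntervalIntegrable (fun θ => 6 * b * θ / (p θ) ^ 2) volume s t := by
        apply ContinuousOn.intervalIntegrable
        apply ContinuousOn.div (by fun_prop) (by fun_prop)
        intro θ hθ
        rw [uIcc_of_le hst] at hθ
        exact pow_ne_zero 2 (hne θ hθ)
      rw [integral_eq_sub_of_hasDerivAt hd hci]
      ring
    have h4 : (∫ θ in s..t, ‖r θ‖) = (p s)⁻¹ - (p t)⁻¹ := by
      rw [intervalIntegral.integral_congr h2, h3]
    have h5 : (p s)⁻¹ - (p t)⁻¹ ≤ 2 / lam := by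
      have hsle : lam ≤ |p s| := h s ⟨le_refl s, hst⟩
      have htle : lam ≤ |p t| := h t ⟨hst, le_refl t⟩
      have e1 : (p s)⁻¹ ≤ 1 / lam := by
        rw [one_div]
        calc (p s)⁻¹ ≤ |(p s)⁻¹| := le_abs_self _
          _ = |p s|⁻¹ := by rw [abs_inv]
          _ ≤ lam⁻¹ := inv_anti₀ hlam hsle
      have e2 : -(p t)⁻¹ ≤ 1 / lam := by
        rw [one_div]
        calc -(p t)⁻¹ ≤ |(p t)⁻¹| := neg_le_abs _
          _ = |p t|⁻¹ := by rw [abs_inv]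
          _ ≤ lam⁻¹ := inv_anti₀ hlam htle
      have e3 : 1 / lam + 1 / lam = 2 / lam := by ring
      linarith
    calc ‖∫ θ in s..t, r θ‖ ≤ ∫ θ in s..t, ‖r θ‖ := h1
      _ = (p s)⁻¹ - (p t)⁻¹ := h4
      _ ≤ 2 / lam := h5
  calc ‖∫ θ in s..t, osc a b θ‖ = ‖(F t - F s) + ∫ θ in s..t, r θ‖ := by rw [split]
    _ ≤ ‖F t - F s‖ + ‖∫ θ in s..t, r θ‖ := norm_add_le _ _
    _ ≤ (‖F t‖ + ‖F s‖) + ‖∫ θ in s..t, r θ‖ := by gcongr; exact norm_sub_le _ _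
    _ ≤ (1 / lam + 1 / lam) + 2 / lam := by gcongr
    _ = 4 / lam := by ring

lemma vdc_pos (a b T : ℝ) (hb : 0 < b) (hT : 0 ≤ T) :
    ‖∫ θ in (0:ℝ)..T, osc a b θ‖ ≤ 5 * b ^ (-(1/3) : ℝ) := by
  set δ := b ^ (-(1/3) : ℝ) with hδ
  set lam := 3 * b ^ ((1/3) : ℝ) with hlamdef
  have hδpos : 0 < δ := Real.rpow_pos_of_pos hb _
  have hlampos : 0 < lam := by
    have := Real.rpow_pos_of_pos hb ((1/3 : ℝ)); rw [hlamdef]; linarith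
  have hkey : 3 * (b * δ * δ) = lam := by
    rw [hδ, hlamdef, show ((1:ℝ)/3) = 1 + -(1/3) + -(1/3) by norm_num,
      Real.rpow_add hb, Real.rpow_add hb, Real.rpow_one]
    ring
  have h4lam : 4 / lam = 4 / 3 * δ := by
    rw [hlamdef, hδ, Real.rpow_neg hb.le]
    have := Real.rpow_pos_of_pos hb ((1/3 : ℝ))
    field_simp
  set m := Real.sqrt (max 0 (-a / (3 * b))) with hm
  have hm0 : 0 ≤ m := Real.sqrt_nonneg _
  have hm2 : m ^ 2 = max 0 (-a / (3 * b)) := Real.sq_sqrt (le_max_left _ _)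
  have ham : 0 ≤ a + 3 * b * m ^ 2 := by
    rw [hm2]
    rcases le_total 0 (-a / (3 * b)) with h' | h'
    · rw [max_eq_right h']
      have h3b : (3 * b) ≠ 0 := by positivity
      have : 3 * b * (-a / (3 * b)) = -a := by field_simp
      linarith
    · rw [max_eq_left h']
      by_contra hc
      push_neg at hc
      have : 0 < -a / (3 * b) := div_pos (by linarith) (by linarith)
      linarith
  set u := min T (max 0 (m - δ)) with hu
  set v := min T (m + δ) with hv
  have hu0 : 0 ≤ u := le_min hT (le_max_left _ _)
  have huv : u ≤ v := min_le_min (le_refl T) (max_le (by positivity) (by linarith))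
  have hvT : v ≤ T := min_le_left _ _
  have i1 : IntervalIntegrable (osc a b) volume 0 u := (osc_cont a b).intervalIntegrable _ _
  have i2 : IntervalIntegrable (osc a b) volume u v := (osc_cont a b).intervalIntegrable _ _
  have i3 : IntervalIntegrable (osc a b) volume 0 v := (osc_cont a b).intervalIntegrable _ _
  have i4 : IntervalIntegrable (osc a b) volume v T := (osc_cont a b).intervalIntegrable _ _
  have esplit : (∫ θ in (0:ℝ)..T, osc a b θ)
      = ((∫ θ in (0:ℝ)..u, osc a b θ) + ∫ θ in u..v, osc a b θ) + ∫ θ in v..T, osc a b θ := by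
    rw [integral_add_adjacent_intervals i1 i2, integral_add_adjacent_intervals i3 i4]
  have bound1 : ‖∫ θ in (0:ℝ)..u, osc a b θ‖ ≤ 4 / lam := by
    rcases eq_or_lt_of_le hu0 with h0 | h0
    · rw [← h0, integral_same]; simp; positivity
    · have hum : u ≤ m - δ := by
        have h1 : u ≤ max 0 (m - δ) := min_le_right _ _
        rcases le_total (m - δ) 0 with h' | h'
        · rw [max_eq_left h'] at h1; linarith
        · rwa [max_eq_right h'] at h1
      have hδm : δ ≤ m := by linarith
      have hmpos : 0 < m := lt_of_lt_of_le hδpos hδm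
      have hmax : max 0 (-a / (3 * b)) = -a / (3 * b) := by
        have h1 : 0 < m ^ 2 := by positivity
        rw [hm2] at h1
        rcases lt_max_iff.mp h1 with h' | h'
        · exact absurd h' (lt_irrefl 0)
        · exact max_eq_right h'.le
      have ha0 : a + 3 * b * m ^ 2 = 0 := by
        rw [hm2, hmax]
        have h3b : (3 * b) ≠ 0 := by positivity
        field_simp
        ring
      apply nonstat a b 0 u lam hb le_rfl h0.le hlampos
      intro θ hθ
      have f1 : δ ≤ m - θ := by linarith [hθ.2]
      have f2 : δ ≤ m + θ := by linarith [hθ.1]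
      have f3 : δ * δ ≤ (m - θ) * (m + θ) := mul_le_mul f1 f2 hδpos.le (by linarith)
      have h2 : a + 3 * b * θ ^ 2 ≤ -lam := by
        nlinarith [mul_le_mul_of_nonneg_left f3 (by linarith : (0:ℝ) ≤ 3 * b)]
      calc lam ≤ -(a + 3 * b * θ ^ 2) := by linarith
        _ ≤ |a + 3 * b * θ ^ 2| := neg_le_abs _
  have bound3 : ‖∫ θ in v..T, osc a b θ‖ ≤ 4 / lam := by
    rcases eq_or_lt_of_le hvT with h0 | h0
    · rw [h0, integral_same]; simp; positivity
    · have hveq : v = m + δ := by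
        rcases le_total T (m + δ) with h' | h'
        · rw [hv, min_eq_left h'] at h0; exact absurd h0 (lt_irrefl T)
        · rw [hv, min_eq_right h']
      have hv0 : 0 ≤ v := le_trans hu0 huv
      apply nonstat a b v T lam hb hv0 h0.le hlampos
      intro θ hθ
      have hθv : v ≤ θ := hθ.1
      rw [hveq] at hθv
      have f1 : δ ≤ θ - m := by linarith
      have f2 : δ ≤ θ + m := by linarith
      have f3 : δ * δ ≤ (θ - m) * (θ + m) := mul_le_mul f1 f2 hδpos.le (by linarith)
      have h2 : lam ≤ a + 3 * b * θ ^ 2 := by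
        nlinarith [mul_le_mul_of_nonneg_left f3 (by linarith : (0:ℝ) ≤ 3 * b)]
      exact le_trans h2 (le_abs_self _)
  have bound2 : ‖∫ θ in u..v, osc a b θ‖ ≤ 2 * δ := by
    have h1 : ‖∫ θ in u..v, osc a b θ‖ ≤ ∫ θ in u..v, ‖osc a b θ‖ :=
      intervalIntegral.norm_integral_le_integral_norm huv
    have h2 : (∫ θ in u..v, ‖osc a b θ‖) = v - u := by
      simp only [osc_norm]
      simp [intervalIntegral.integral_const]
    have hvu : v - u ≤ 2 * δ := by
      rcases le_total T (m - δ) with h' | h'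
      · have hu' : u = T := by
          rw [hu, min_eq_left (le_trans h' (le_max_right 0 _))]
        rw [hu']
        have : v ≤ T := min_le_left _ _
        linarith
      · have hu' : m - δ ≤ u := le_min h' (le_max_right 0 (m - δ))
        have hv' : v ≤ m + δ := min_le_right _ _
        linarith
    linarith
  calc ‖∫ θ in (0:ℝ)..T, osc a b θ‖
      = ‖((∫ θ in (0:ℝ)..u, osc a b θ) + ∫ θ in u..v, osc a b θ) + ∫ θ in v..T, osc a b θ‖ := by
        rw [esplit]
    _ ≤ ‖(∫ θ in (0:ℝ)..u, osc a b θ) + ∫ θ in u..v, osc a b θ‖ + ‖∫ θ in v..T, osc a b θ‖ :=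
        norm_add_le _ _
    _ ≤ (‖∫ θ in (0:ℝ)..u, osc a b θ‖ + ‖∫ θ in u..v, osc a b θ‖) + ‖∫ θ in v..T, osc a b θ‖ :=
        add_le_add_left (norm_add_le _ _) _
    _ ≤ (4 / lam + 2 * δ) + 4 / lam := by gcongr
    _ = 4 / 3 * δ + 2 * δ + 4 / 3 * δ := by rw [h4lam]
    _ ≤ 5 * δ := by linarith

lemma osc_conj (a b θ : ℝ) : osc a b θ = (starRingEnd ℂ) (osc (-a) (-b) θ) := by
  rw [osc, osc, ← Complex.exp_conj]
  congr 1
  rw [map_mul, Complex.conj_I, Complex.conj_ofReal]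
  push_cast
  ring

lemma vdc (a b T : ℝ) (hb : b ≠ 0) (hT : 0 ≤ T) :
    ‖∫ θ in (0:ℝ)..T, osc a b θ‖ ≤ 5 * |b| ^ (-(1/3) : ℝ) := by
  rcases hb.lt_or_gt with hneg | hpos
  · have h1 : (∫ θ in (0:ℝ)..T, osc a b θ)
        = (starRingEnd ℂ) (∫ θ in (0:ℝ)..T, osc (-a) (-b) θ) := by
      have hcj : ∀ (f : ℝ → ℂ) (c d : ℝ),
          ∫ x in c..d, (starRingEnd ℂ) (f x) = (starRingEnd ℂ) (∫ x in c..d, f x) := by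
        intro f c d
        simp only [intervalIntegral]
        rw [integral_conj, integral_conj, map_sub]
      rw [← hcj]
      exact intervalIntegral.integral_congr fun θ _ => osc_conj a b θ
    rw [h1, RCLike.norm_conj, abs_of_neg hneg]
    exact vdc_pos (-a) (-b) T (by linarith) hT
  · rw [abs_of_pos hpos]
    exact vdc_pos a b T hpos hT

lemma integrable_osc_exp (a b c : ℝ) (hc : 0 < c) :
    Integrable (fun θ : ℝ => osc a b θ * ((Real.exp (-(c * θ ^ 4)) : ℝ) : ℂ)) := by
  have hcont : Continuous fun θ : ℝ => osc a b θ * ((Real.exp (-(c * θ ^ 4)) : ℝ) : ℂ) :=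
    (osc_cont a b).mul (by fun_prop)
  refine Integrable.mono' ((integrable_exp_neg_mul_sq hc).const_mul (Real.exp c))
    hcont.aestronglyMeasurable (Filter.Eventually.of_forall fun θ => ?_)
  rw [norm_mul, osc_norm, one_mul, Complex.norm_real, Real.norm_eq_abs,
    abs_of_pos (Real.exp_pos _), ← Real.exp_add]
  apply Real.exp_le_exp.2
  have h1 : (0:ℝ) ≤ θ ^ 4 + 1 - θ ^ 2 := by nlinarith [sq_nonneg (θ ^ 2 - 1)]
  nlinarith [mul_nonneg hc.le h1]

lemma quartic_hasDerivAt (c θ : ℝ) :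
    HasDerivAt (fun θ : ℝ => -(c * θ ^ 4)) (-(4 * c * θ ^ 3)) θ := by
  have := ((hasDerivAt_pow 4 θ).const_mul c).neg
  exact this.congr_deriv (by ring)

lemma amp (a b c : ℝ) (hb : b ≠ 0) (hc : 0 < c) :
    ‖∫ θ in Set.Ioi (0:ℝ), osc a b θ * ((Real.exp (-(c * θ ^ 4)) : ℝ) : ℂ)‖
      ≤ 5 * |b| ^ (-(1/3) : ℝ) := by
  set M := 5 * |b| ^ (-(1/3) : ℝ) with hM
  have hM0 : 0 ≤ M := by positivity
  have hint := (integrable_osc_exp a b c hc).integrableOn (s := Set.Ioi 0)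
  have htendsto := intervalIntegral_tendsto_integral_Ioi 0 hint Filter.tendsto_id
  refine le_of_tendsto htendsto.norm ?_
  filter_upwards [Filter.eventually_ge_atTop (0:ℝ)] with T hT
  set v : ℝ → ℂ := fun θ => ∫ s in (0:ℝ)..θ, osc a b s with hvdef
  have hv : ∀ θ : ℝ, HasDerivAt v (osc a b θ) θ := fun θ =>
    ((osc_cont a b).integral_hasStrictDerivAt 0 θ).hasDerivAt
  have hvc : Continuous v := by
    apply continuous_iff_continuousAt.2
    exact fun θ => (hv θ).continuousAt
  have hvM : ∀ θ : ℝ, 0 ≤ θ → ‖v θ‖ ≤ M := fun θ hθ => vdc a b θ hb hθ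
  have hu : ∀ θ : ℝ, HasDerivAt (fun θ : ℝ => ((Real.exp (-(c * θ ^ 4)) : ℝ) : ℂ))
      (((-(4 * c * θ ^ 3) * Real.exp (-(c * θ ^ 4)) : ℝ) : ℂ)) θ := by
    intro θ
    have h1 := ((quartic_hasDerivAt c θ).exp).ofReal_comp
    convert h1 using 1
    push_cast
    ring
  have hu'cont : Continuous fun θ : ℝ => ((-(4 * c * θ ^ 3) * Real.exp (-(c * θ ^ 4)) : ℝ) : ℂ) := by
    fun_prop
  have ibp := intervalIntegral.integral_mul_deriv_eq_deriv_mul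
    (a := (0:ℝ)) (b := T)
    (u := fun θ : ℝ => ((Real.exp (-(c * θ ^ 4)) : ℝ) : ℂ)) (v := v)
    (u' := fun θ : ℝ => ((-(4 * c * θ ^ 3) * Real.exp (-(c * θ ^ 4)) : ℝ) : ℂ))
    (v' := osc a b)
    (fun θ _ => hu θ) (fun θ _ => hv θ)
    (hu'cont.intervalIntegrable _ _) ((osc_cont a b).intervalIntegrable _ _)
  have hcomm : (∫ θ in (0:ℝ)..T, osc a b θ * ((Real.exp (-(c * θ ^ 4)) : ℝ) : ℂ))
      = ∫ θ in (0:ℝ)..T, ((Real.exp (-(c * θ ^ 4)) : ℝ) : ℂ) * osc a b θ :=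
    intervalIntegral.integral_congr fun θ _ => mul_comm _ _
  have hv0 : v 0 = 0 := intervalIntegral.integral_same
  simp only [id_eq]
  rw [hcomm.trans ibp, hv0]
  simp only [mul_zero, sub_zero]
  have hnorm1 : ‖((Real.exp (-(c * T ^ 4)) : ℝ) : ℂ) * v T‖
      ≤ Real.exp (-(c * T ^ 4)) * M := by
    rw [norm_mul, Complex.norm_real, Real.norm_eq_abs, abs_of_pos (Real.exp_pos _)]
    exact mul_le_mul_of_nonneg_left (hvM T hT) (Real.exp_pos _).le
  have hnorm2 : ‖∫ θ in (0:ℝ)..T,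
        ((-(4 * c * θ ^ 3) * Real.exp (-(c * θ ^ 4)) : ℝ) : ℂ) * v θ‖
      ≤ M * (1 - Real.exp (-(c * T ^ 4))) := by
    have h1 : ‖∫ θ in (0:ℝ)..T, ((-(4 * c * θ ^ 3) * Real.exp (-(c * θ ^ 4)) : ℝ) : ℂ) * v θ‖
        ≤ ∫ θ in (0:ℝ)..T, ‖((-(4 * c * θ ^ 3) * Real.exp (-(c * θ ^ 4)) : ℝ) : ℂ) * v θ‖ :=
      intervalIntegral.norm_integral_le_integral_norm hT
    have h2 : (∫ θ in (0:ℝ)..T, ‖((-(4 * c * θ ^ 3) * Real.exp (-(c * θ ^ 4)) : ℝ) : ℂ) * v θ‖)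
        ≤ ∫ θ in (0:ℝ)..T, (4 * c * θ ^ 3 * Real.exp (-(c * θ ^ 4))) * M := by
      apply intervalIntegral.integral_mono_on hT
      · exact ((hu'cont.mul hvc).norm).intervalIntegrable _ _
      · apply Continuous.intervalIntegrable; fun_prop
      · intro θ hθ
        rw [norm_mul, Complex.norm_real, Real.norm_eq_abs]
        have hθ0 : 0 ≤ θ := hθ.1
        have habs : |(-(4 * c * θ ^ 3) * Real.exp (-(c * θ ^ 4)))|
            = 4 * c * θ ^ 3 * Real.exp (-(c * θ ^ 4)) := by
          rw [abs_mul, abs_of_pos (Real.exp_pos _), abs_neg,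
            abs_of_nonneg (by positivity : (0:ℝ) ≤ 4 * c * θ ^ 3)]
        rw [habs]
        exact mul_le_mul_of_nonneg_left (hvM θ hθ0) (by positivity)
    have h3 : (∫ θ in (0:ℝ)..T, (4 * c * θ ^ 3 * Real.exp (-(c * θ ^ 4))) * M)
        = (1 - Real.exp (-(c * T ^ 4))) * M := by
      have hd : ∀ θ ∈ Set.uIcc (0:ℝ) T,
          HasDerivAt (fun θ : ℝ => (-Real.exp (-(c * θ ^ 4))) * M)
            ((4 * c * θ ^ 3 * Real.exp (-(c * θ ^ 4))) * M) θ := by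
        intro θ _
        have h1 := (((quartic_hasDerivAt c θ).exp).neg).mul_const M
        refine h1.congr_deriv ?_; symm
        ring
      rw [intervalIntegral.integral_eq_sub_of_hasDerivAt hd
        (by apply Continuous.intervalIntegrable; fun_prop)]
      simp [Real.exp_zero]
      ring
    calc ‖∫ θ in (0:ℝ)..T, ((-(4 * c * θ ^ 3) * Real.exp (-(c * θ ^ 4)) : ℝ) : ℂ) * v θ‖
        ≤ ∫ θ in (0:ℝ)..T, ‖((-(4 * c * θ ^ 3) * Real.exp (-(c * θ ^ 4)) : ℝ) : ℂ) * v θ‖ := h1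
      _ ≤ ∫ θ in (0:ℝ)..T, (4 * c * θ ^ 3 * Real.exp (-(c * θ ^ 4))) * M := h2
      _ = (1 - Real.exp (-(c * T ^ 4))) * M := h3
      _ = M * (1 - Real.exp (-(c * T ^ 4))) := by ring
  calc ‖((Real.exp (-(c * T ^ 4)) : ℝ) : ℂ) * v T - ∫ θ in (0:ℝ)..T,
        ((-(4 * c * θ ^ 3) * Real.exp (-(c * θ ^ 4)) : ℝ) : ℂ) * v θ‖
      ≤ ‖((Real.exp (-(c * T ^ 4)) : ℝ) : ℂ) * v T‖ + ‖∫ θ in (0:ℝ)..T,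
        ((-(4 * c * θ ^ 3) * Real.exp (-(c * θ ^ 4)) : ℝ) : ℂ) * v θ‖ := norm_sub_le _ _
    _ ≤ Real.exp (-(c * T ^ 4)) * M + M * (1 - Real.exp (-(c * T ^ 4))) := by
        gcongr
    _ = M := by ring

/-- Uniform bound `|G(x,y)| ≤ C y^{-1/3}` for the approximate Green's function
`G(x,y) = (1/2π) ∫_ℝ e^{ixθ} e^{ic₃yθ³} e^{-c₄yθ⁴} dθ`. -/
theorem stmt_14 (c₃ c₄ : ℝ) (h3 : c₃ ≠ 0) (h4 : 0 < c₄) :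
    ∃ C > (0 : ℝ), ∀ y : ℝ, 0 < y → ∀ x : ℝ,
      ‖(1 / (2 * Real.pi) : ℂ) * ∫ θ : ℝ,
          Complex.exp (Complex.I * (x : ℂ) * (θ : ℂ)) *
            Complex.exp (Complex.I * (c₃ : ℂ) * (y : ℂ) * (θ : ℂ) ^ 3) *
            Complex.exp (((-(c₄ * y * θ ^ 4) : ℝ) : ℂ))‖
        ≤ C * y ^ (-(1 / 3) : ℝ) := by
  refine ⟨5 / Real.pi * |c₃| ^ (-(1/3) : ℝ), ?_, ?_⟩
  · have h1 : (0:ℝ) < |c₃| ^ (-(1/3) : ℝ) := Real.rpow_pos_of_pos (abs_pos.2 h3) _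
    have h2 : (0:ℝ) < 5 / Real.pi := div_pos (by norm_num) Real.pi_pos
    exact mul_pos h2 h1
  intro y hy x
  set b := c₃ * y with hbdef
  set c := c₄ * y with hcdef
  have hb : b ≠ 0 := mul_ne_zero h3 (ne_of_gt hy)
  have hc : 0 < c := mul_pos h4 hy
  set g : ℝ → ℂ := fun θ => osc x b θ * ((Real.exp (-(c * θ ^ 4)) : ℝ) : ℂ) with hgdef
  have hfeq : (fun θ : ℝ =>
      Complex.exp (Complex.I * (x : ℂ) * (θ : ℂ)) *
        Complex.exp (Complex.I * (c₃ : ℂ) * (y : ℂ) * (θ : ℂ) ^ 3) *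
        Complex.exp (((-(c₄ * y * θ ^ 4) : ℝ) : ℂ))) = g := by
    funext θ
    rw [hgdef]
    show _ = osc x b θ * _
    rw [osc, Complex.ofReal_exp, ← Complex.exp_add, ← Complex.exp_add, ← Complex.exp_add]
    congr 1
    simp only [hbdef, hcdef]
    push_cast
    ring
  rw [hfeq]
  have hInt := integrable_osc_exp x b c hc
  have hsplit : (∫ θ : ℝ, g θ) = (∫ θ in Set.Iic 0, g θ) + ∫ θ in Set.Ioi 0, g θ :=
    (integral_Iic_add_Ioi hInt.integrableOn hInt.integrableOn).symm
  have hneg : (∫ θ in Set.Iic (0:ℝ), g θ)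
      = ∫ θ in Set.Ioi (0:ℝ), osc (-x) (-b) θ * ((Real.exp (-(c * θ ^ 4)) : ℝ) : ℂ) := by
    have h1 : (∫ θ in Set.Ioi (0:ℝ), g (-θ)) = ∫ θ in Set.Iic (-(0:ℝ)), g θ :=
      integral_comp_neg_Ioi 0 g
    rw [neg_zero] at h1
    rw [← h1]
    apply setIntegral_congr_fun measurableSet_Ioi
    intro θ _
    show g (-θ) = _
    rw [hgdef]
    show osc x b (-θ) * _ = osc (-x) (-b) θ * _
    rw [osc, osc]
    have e1 : (x * (-θ) + b * (-θ) ^ 3 : ℝ) = (-x) * θ + (-b) * θ ^ 3 := by ring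
    have e2 : (-(c * (-θ) ^ 4) : ℝ) = -(c * θ ^ 4) := by ring
    rw [e1, e2]
  have hbd1 : ‖∫ θ in Set.Ioi (0:ℝ), g θ‖ ≤ 5 * |b| ^ (-(1/3) : ℝ) := amp x b c hb hc
  have hbd2 : ‖∫ θ in Set.Iic (0:ℝ), g θ‖ ≤ 5 * |b| ^ (-(1/3) : ℝ) := by
    rw [hneg]
    have := amp (-x) (-b) c (by simpa using hb) hc
    rwa [abs_neg] at this
  have htot : ‖∫ θ : ℝ, g θ‖ ≤ 10 * |b| ^ (-(1/3) : ℝ) := by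
    rw [hsplit]
    calc ‖(∫ θ in Set.Iic (0:ℝ), g θ) + ∫ θ in Set.Ioi (0:ℝ), g θ‖
        ≤ ‖∫ θ in Set.Iic (0:ℝ), g θ‖ + ‖∫ θ in Set.Ioi (0:ℝ), g θ‖ := norm_add_le _ _
      _ ≤ 5 * |b| ^ (-(1/3) : ℝ) + 5 * |b| ^ (-(1/3) : ℝ) := add_le_add hbd2 hbd1
      _ = 10 * |b| ^ (-(1/3) : ℝ) := by ring
  have habs : |b| ^ (-(1/3) : ℝ) = |c₃| ^ (-(1/3) : ℝ) * y ^ (-(1/3) : ℝ) := by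
    rw [hbdef, abs_mul, abs_of_pos hy, Real.mul_rpow (abs_nonneg _) hy.le]
  have hnc : ‖(1 / (2 * Real.pi) : ℂ)‖ = 1 / (2 * Real.pi) := by
    rw [show ((1 / (2 * Real.pi) : ℂ)) = ((1 / (2 * Real.pi) : ℝ) : ℂ) by push_cast; ring]
    rw [Complex.norm_real, Real.norm_eq_abs, abs_of_pos (by positivity)]
  rw [norm_mul, hnc]
  calc 1 / (2 * Real.pi) * ‖∫ θ : ℝ, g θ‖
      ≤ 1 / (2 * Real.pi) * (10 * |b| ^ (-(1/3) : ℝ)) := by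
        apply mul_le_mul_of_nonneg_left htot (by positivity)
    _ = 5 / Real.pi * |c₃| ^ (-(1/3) : ℝ) * y ^ (-(1/3) : ℝ) := by
        rw [habs]
        field_simp
        ring
end

section
/- Fix c₃ > 0 and c₄ > 0 and let G(x,y) := (1/(2π)) ∫_ℝ e^{ixθ} e^{i c₃ y θ³} e^{-c₄ y θ⁴} dθ. Then for every μ ∈ ℝ, G(x,y) = (1/(2π)) ∫_ℝ e^{ix(iμ+θ)} e^{i c₃ y (iμ+θ)³} e^{-c₄ y (iμ+θ)⁴} dθ, and consequently |G(x,y)| ≤ (1/(2π)) e^{-xμ + c₃ y μ³ - c₄ y μ⁴} ∫_ℝ e^{-3yμ(c₃ - 2c₄μ)θ²} e^{-c₄ y θ⁴} dθ. -/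
open Complex Real Filter intervalIntegral MeasureTheory Topology

noncomputable def Faux (x y c₃ c₄ : ℝ) (z : ℂ) : ℂ :=
  Complex.exp (Complex.I * x * z) * Complex.exp (Complex.I * c₃ * y * z ^ 3) *
    Complex.exp (-(c₄ : ℂ) * y * z ^ 4)

lemma Faux_diff (x y c₃ c₄ : ℝ) : Differentiable ℂ (Faux x y c₃ c₄) := by
  unfold Faux; fun_prop

lemma Faux_cont (x y c₃ c₄ : ℝ) : Continuous (Faux x y c₃ c₄) :=
  (Faux_diff x y c₃ c₄).continuous

lemma norm_Faux (x y c₃ c₄ : ℝ) (θ μ : ℝ) :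
    ‖Faux x y c₃ c₄ (θ + μ * Complex.I)‖ =
      Real.exp (-x * μ + c₃ * y * μ ^ 3 - c₄ * y * μ ^ 4) *
        (Real.exp (-3 * y * μ * (c₃ - 2 * c₄ * μ) * θ ^ 2) * Real.exp (-c₄ * y * θ ^ 4)) := by
  unfold Faux
  rw [norm_mul, norm_mul,
    Complex.norm_exp, Complex.norm_exp, Complex.norm_exp, ← Real.exp_add, ← Real.exp_add,
    ← Real.exp_add, ← Real.exp_add]
  congr 1
  simp only [pow_succ, pow_zero, one_mul, Complex.mul_re, Complex.mul_im, Complex.add_re,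
    Complex.add_im, Complex.I_re, Complex.I_im, Complex.ofReal_re, Complex.ofReal_im,
    Complex.neg_re, Complex.neg_im]
  ring

lemma int_aux (a b : ℝ) (hb : 0 < b) :
    Integrable fun θ : ℝ => Real.exp (a * θ ^ 2) * Real.exp (-b * θ ^ 4) := by
  refine Integrable.mono' ((integrable_exp_neg_mul_sq one_pos).const_mul
    (Real.exp ((a + 1) ^ 2 / (4 * b)))) ?_ ?_
  · exact (((Real.continuous_exp.comp (by fun_prop)).mul (Real.continuous_exp.comp (by fun_prop))) : Continuous fun θ : ℝ => Real.exp (a * θ ^ 2) * Real.exp (-b * θ ^ 4)).aestronglyMeasurable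
  · filter_upwards with θ
    rw [Real.norm_eq_abs, abs_of_pos (by positivity), ← Real.exp_add, ← Real.exp_add]
    apply Real.exp_le_exp.2
    have h4b : (0:ℝ) < 4 * b := by positivity
    rw [div_add' _ _ _ h4b.ne', le_div_iff₀ h4b]
    nlinarith [sq_nonneg (2 * b * θ^2 - (a+1)), sq_nonneg θ]

lemma int_Faux (x y c₃ c₄ : ℝ) (hy : 0 < y) (h4 : 0 < c₄) (μ : ℝ) :
    Integrable fun θ : ℝ => Faux x y c₃ c₄ (θ + μ * Complex.I) := by
  refine Integrable.mono' ((int_aux (-3 * y * μ * (c₃ - 2 * c₄ * μ)) (c₄ * y)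
    (by positivity)).const_mul (Real.exp (-x * μ + c₃ * y * μ ^ 3 - c₄ * y * μ ^ 4))) ?_ ?_
  · exact ((Faux_cont x y c₃ c₄).comp (by fun_prop)).aestronglyMeasurable
  · filter_upwards with θ
    rw [norm_Faux]
    simp only [neg_mul]
    rfl

lemma vert_bound (x y c₃ c₄ : ℝ) (hy : 0 < y) (h3 : 0 < c₃) (h4 : 0 < c₄) (μ T s θ : ℝ)
    (hs : |s| ≤ |μ|) (hθ : θ ^ 2 = T ^ 2) :
    ‖Faux x y c₃ c₄ (θ + s * Complex.I)‖ ≤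
      Real.exp (|x| * |μ| + c₃ * y * |μ| ^ 3) *
        (Real.exp ((3 * y * |μ| * (c₃ + 2 * c₄ * |μ|)) * T ^ 2) * Real.exp (-c₄ * y * T ^ 4)) := by
  have hθ4 : θ ^ 4 = T ^ 4 := by
    have : θ ^ 4 = (θ ^ 2) ^ 2 := by ring
    rw [this, hθ]; ring
  rw [norm_Faux, hθ, hθ4]
  have hs1 : -s ≤ |μ| := (neg_le_abs s).trans hs
  have hs2 : s ≤ |μ| := (le_abs_self s).trans hs
  have hsq : s ^ 2 ≤ |μ| ^ 2 := by
    rw [← _root_.sq_abs s]; exact pow_le_pow_left₀ (abs_nonneg s) hs 2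
  have hA : -x * s + c₃ * y * s ^ 3 - c₄ * y * s ^ 4 ≤ |x| * |μ| + c₃ * y * |μ| ^ 3 := by
    have h1 : -x * s ≤ |x| * |μ| := by
      calc -x * s = -(x * s) := by ring
      _ ≤ |x * s| := neg_le_abs _
      _ = |x| * |s| := abs_mul x s
      _ ≤ |x| * |μ| := mul_le_mul_of_nonneg_left hs (abs_nonneg x)
    have h2 : s ^ 3 ≤ |μ| ^ 3 := by
      calc s ^ 3 ≤ |s ^ 3| := le_abs_self _
      _ = |s| ^ 3 := abs_pow s 3
      _ ≤ |μ| ^ 3 := pow_le_pow_left₀ (abs_nonneg s) hs 3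
    have h3' : c₃ * y * s ^ 3 ≤ c₃ * y * |μ| ^ 3 :=
      mul_le_mul_of_nonneg_left h2 (by positivity)
    nlinarith [mul_nonneg (mul_nonneg h4.le hy.le) (sq_nonneg (s^2)), sq_nonneg (s^2)]
  have hB : -3 * y * s * (c₃ - 2 * c₄ * s) ≤ 3 * y * |μ| * (c₃ + 2 * c₄ * |μ|) := by
    nlinarith [mul_le_mul_of_nonneg_left hs1 (by positivity : (0:ℝ) ≤ 3 * y * c₃),
      mul_le_mul_of_nonneg_left hsq (by positivity : (0:ℝ) ≤ 6 * y * c₄)]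
  have hBT : -3 * y * s * (c₃ - 2 * c₄ * s) * T ^ 2 ≤ 3 * y * |μ| * (c₃ + 2 * c₄ * |μ|) * T ^ 2 :=
    mul_le_mul_of_nonneg_right hB (sq_nonneg T)
  exact mul_le_mul (Real.exp_le_exp.2 hA)
    (mul_le_mul_of_nonneg_right (Real.exp_le_exp.2 hBT) (Real.exp_pos _).le)
    (by positivity) (Real.exp_pos _).le

lemma shift_Faux (x y c₃ c₄ : ℝ) (h3 : 0 < c₃) (h4 : 0 < c₄) (hy : 0 < y) (μ : ℝ) :
    (∫ θ : ℝ, Faux x y c₃ c₄ θ) = ∫ θ : ℝ, Faux x y c₃ c₄ (θ + μ * Complex.I) := by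
  have hint0 : Integrable fun θ : ℝ => Faux x y c₃ c₄ θ := by
    have := int_Faux x y c₃ c₄ hy h4 0
    simpa using this
  refine tendsto_nhds_unique
    (intervalIntegral_tendsto_integral hint0 tendsto_neg_atTop_atBot tendsto_id) ?_
  have C : ∀ T : ℝ,
      (∫ θ : ℝ in -T..T, Faux x y c₃ c₄ θ)
        - (∫ θ : ℝ in -T..T, Faux x y c₃ c₄ (θ + μ * Complex.I))
        + Complex.I * (∫ s : ℝ in (0:ℝ)..μ, Faux x y c₃ c₄ (T + s * Complex.I))
        - Complex.I * (∫ s : ℝ in (0:ℝ)..μ, Faux x y c₃ c₄ (-(T:ℂ) + s * Complex.I)) = 0 := by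
    intro T
    have := Complex.integral_boundary_rect_eq_zero_of_differentiableOn (Faux x y c₃ c₄)
      (-T) (T + μ * Complex.I) ((Faux_diff x y c₃ c₄).differentiableOn)
    simp only [Complex.neg_im, Complex.ofReal_im, neg_zero, Complex.ofReal_zero, zero_mul,
      add_zero, Complex.neg_re, Complex.ofReal_re, Complex.add_re, Complex.mul_re, Complex.I_re,
      mul_zero, Complex.I_im, tsub_zero, Complex.add_im, Complex.mul_im, mul_one, zero_add,
      smul_eq_mul, Complex.ofReal_neg] at this
    exact this
  set K := 3 * y * |μ| * (c₃ + 2 * c₄ * |μ|) with hK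
  set A0 := |x| * |μ| + c₃ * y * |μ| ^ 3 with hA0
  have habs : ∀ s ∈ Set.uIoc (0:ℝ) μ, |s| ≤ |μ| := by
    intro s hs
    have hmin : -|μ| ≤ min 0 μ := le_min (by simp [abs_nonneg]) (neg_abs_le μ)
    have hmax : max 0 μ ≤ |μ| := max_le (abs_nonneg μ) (le_abs_self μ)
    exact abs_le.2 ⟨hmin.trans hs.1.le, hs.2.trans hmax⟩
  have hprod : Tendsto (fun T : ℝ => Real.exp (K * T ^ 2) * Real.exp (-c₄ * y * T ^ 4))
      atTop (𝓝 0) := by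
    have h2 : Tendsto (fun T : ℝ => T ^ 2 * (c₄ * y * T ^ 2 - K)) atTop atTop := by
      refine (tendsto_pow_atTop two_ne_zero).atTop_mul_atTop₀ ?_
      refine tendsto_atTop_add_const_right _ (-K) ?_
      exact (tendsto_pow_atTop two_ne_zero).const_mul_atTop (by positivity)
    have h1 : Tendsto (fun T : ℝ => K * T ^ 2 + -c₄ * y * T ^ 4) atTop atBot :=
      (tendsto_neg_atTop_atBot.comp h2).congr (fun T => by simp; ring)
    have := Real.tendsto_exp_atBot.comp h1
    simpa [Function.comp_def, Real.exp_add] using this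
  have hV : Tendsto (fun T : ℝ =>
      Complex.I * (∫ s : ℝ in (0:ℝ)..μ, Faux x y c₃ c₄ (-(T:ℂ) + s * Complex.I))
        - Complex.I * (∫ s : ℝ in (0:ℝ)..μ, Faux x y c₃ c₄ (T + s * Complex.I)))
      atTop (𝓝 0) := by
    have hg : Tendsto (fun T : ℝ => 2 * (Real.exp A0 *
        (Real.exp (K * T ^ 2) * Real.exp (-c₄ * y * T ^ 4)) * |μ|)) atTop (𝓝 0) := by
      have := ((hprod.const_mul (Real.exp A0)).mul_const |μ|).const_mul 2
      simpa using this
    refine squeeze_zero_norm (fun T => ?_) hg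
    have hb1 : ‖∫ s : ℝ in (0:ℝ)..μ, Faux x y c₃ c₄ (-(T:ℂ) + s * Complex.I)‖ ≤
        Real.exp A0 * (Real.exp (K * T ^ 2) * Real.exp (-c₄ * y * T ^ 4)) * |μ| := by
      have := intervalIntegral.norm_integral_le_of_norm_le_const
        (C := Real.exp A0 * (Real.exp (K * T ^ 2) * Real.exp (-c₄ * y * T ^ 4)))
        (f := fun s : ℝ => Faux x y c₃ c₄ (-(T:ℂ) + s * Complex.I)) (a := (0:ℝ)) (b := μ) ?_
      · simpa using this
      · intro s hs
        have h := vert_bound x y c₃ c₄ hy h3 h4 μ T s (-T) (habs s hs) (by ring)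
        simpa [Complex.ofReal_neg] using h
    have hb2 : ‖∫ s : ℝ in (0:ℝ)..μ, Faux x y c₃ c₄ ((T:ℂ) + s * Complex.I)‖ ≤
        Real.exp A0 * (Real.exp (K * T ^ 2) * Real.exp (-c₄ * y * T ^ 4)) * |μ| := by
      have := intervalIntegral.norm_integral_le_of_norm_le_const
        (C := Real.exp A0 * (Real.exp (K * T ^ 2) * Real.exp (-c₄ * y * T ^ 4)))
        (f := fun s : ℝ => Faux x y c₃ c₄ ((T:ℂ) + s * Complex.I)) (a := (0:ℝ)) (b := μ) ?_
      · simpa using this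
      · intro s hs
        exact vert_bound x y c₃ c₄ hy h3 h4 μ T s T (habs s hs) rfl
    calc ‖_ - _‖ ≤ ‖Complex.I * (∫ s : ℝ in (0:ℝ)..μ, Faux x y c₃ c₄ (-(T:ℂ) + s * Complex.I))‖
          + ‖Complex.I * (∫ s : ℝ in (0:ℝ)..μ, Faux x y c₃ c₄ ((T:ℂ) + s * Complex.I))‖ :=
        norm_sub_le _ _
    _ = ‖(∫ s : ℝ in (0:ℝ)..μ, Faux x y c₃ c₄ (-(T:ℂ) + s * Complex.I))‖
          + ‖(∫ s : ℝ in (0:ℝ)..μ, Faux x y c₃ c₄ ((T:ℂ) + s * Complex.I))‖ := by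
        simp [Complex.norm_I]
    _ ≤ 2 * (Real.exp A0 * (Real.exp (K * T ^ 2) * Real.exp (-c₄ * y * T ^ 4)) * |μ|) := by
        linarith
  have key : ∀ T : ℝ, (∫ θ : ℝ in -T..T, Faux x y c₃ c₄ θ)
      = (∫ θ : ℝ in -T..T, Faux x y c₃ c₄ (θ + μ * Complex.I))
        + (Complex.I * (∫ s : ℝ in (0:ℝ)..μ, Faux x y c₃ c₄ (-(T:ℂ) + s * Complex.I))
          - Complex.I * (∫ s : ℝ in (0:ℝ)..μ, Faux x y c₃ c₄ (T + s * Complex.I))) :=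
    fun T => by linear_combination C T
  rw [show (∫ θ : ℝ, Faux x y c₃ c₄ (θ + μ * Complex.I))
      = (∫ θ : ℝ, Faux x y c₃ c₄ (θ + μ * Complex.I)) + 0 by rw [add_zero]]
  refine Tendsto.congr (fun T => (key T).symm) ?_
  exact (intervalIntegral_tendsto_integral (int_Faux x y c₃ c₄ hy h4 μ)
    tendsto_neg_atTop_atBot tendsto_id).add hV

/-- Contour shift by `iμ` for the approximate Green's function, and the resulting
modulus bound. -/
theorem stmt_15 (c₃ c₄ : ℝ) (h3 : 0 < c₃) (h4 : 0 < c₄) (x y : ℝ) (hy : 0 < y)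
    (μ : ℝ) :
    ((1 / (2 * Real.pi) : ℂ) * ∫ θ : ℝ,
        Complex.exp (Complex.I * (x : ℂ) * (θ : ℂ)) *
          Complex.exp (Complex.I * (c₃ : ℂ) * (y : ℂ) * (θ : ℂ) ^ 3) *
          Complex.exp (((-(c₄ * y * θ ^ 4) : ℝ) : ℂ)))
      = (1 / (2 * Real.pi) : ℂ) * ∫ θ : ℝ,
          Complex.exp (Complex.I * (x : ℂ) * (Complex.I * (μ : ℂ) + (θ : ℂ))) *
            Complex.exp (Complex.I * (c₃ : ℂ) * (y : ℂ)
              * (Complex.I * (μ : ℂ) + (θ : ℂ)) ^ 3) *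
            Complex.exp (-(c₄ : ℂ) * (y : ℂ) * (Complex.I * (μ : ℂ) + (θ : ℂ)) ^ 4)
    ∧ ‖(1 / (2 * Real.pi) : ℂ) * ∫ θ : ℝ,
          Complex.exp (Complex.I * (x : ℂ) * (θ : ℂ)) *
            Complex.exp (Complex.I * (c₃ : ℂ) * (y : ℂ) * (θ : ℂ) ^ 3) *
            Complex.exp (((-(c₄ * y * θ ^ 4) : ℝ) : ℂ))‖
        ≤ (1 / (2 * Real.pi)) * Real.exp (-x * μ + c₃ * y * μ ^ 3 - c₄ * y * μ ^ 4)
            * ∫ θ : ℝ, Real.exp (-3 * y * μ * (c₃ - 2 * c₄ * μ) * θ ^ 2)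
                * Real.exp (-c₄ * y * θ ^ 4) := by
  have e1 : (fun θ : ℝ =>
      Complex.exp (Complex.I * (x : ℂ) * (θ : ℂ)) *
        Complex.exp (Complex.I * (c₃ : ℂ) * (y : ℂ) * (θ : ℂ) ^ 3) *
        Complex.exp (((-(c₄ * y * θ ^ 4) : ℝ) : ℂ)))
      = fun θ : ℝ => Faux x y c₃ c₄ θ := by
    funext θ
    unfold Faux
    congr 1
    congr 1
    push_cast
    ring
  have e2 : (fun θ : ℝ =>
      Complex.exp (Complex.I * (x : ℂ) * (Complex.I * (μ : ℂ) + (θ : ℂ))) *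
        Complex.exp (Complex.I * (c₃ : ℂ) * (y : ℂ) * (Complex.I * (μ : ℂ) + (θ : ℂ)) ^ 3) *
        Complex.exp (-(c₄ : ℂ) * (y : ℂ) * (Complex.I * (μ : ℂ) + (θ : ℂ)) ^ 4))
      = fun θ : ℝ => Faux x y c₃ c₄ (θ + μ * Complex.I) := by
    funext θ
    unfold Faux
    rw [show (Complex.I * (μ : ℂ) + (θ : ℂ)) = ((θ : ℂ) + (μ : ℂ) * Complex.I) by ring]
  have hshift := shift_Faux x y c₃ c₄ h3 h4 hy μ
  have hπ : 0 < Real.pi := Real.pi_pos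
  constructor
  · rw [e1, e2, hshift]
  · rw [e1, hshift, norm_mul]
    have hnc : ‖(1 / (2 * (Real.pi : ℂ)) : ℂ)‖ = 1 / (2 * Real.pi) := by
      rw [norm_div, norm_one, norm_mul]
      simp [Complex.norm_real, abs_of_pos hπ]
    rw [hnc]
    have hbound : ‖∫ θ : ℝ, Faux x y c₃ c₄ (θ + μ * Complex.I)‖ ≤
        Real.exp (-x * μ + c₃ * y * μ ^ 3 - c₄ * y * μ ^ 4) *
          ∫ θ : ℝ, Real.exp (-3 * y * μ * (c₃ - 2 * c₄ * μ) * θ ^ 2) *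
            Real.exp (-c₄ * y * θ ^ 4) := by
      refine (MeasureTheory.norm_integral_le_integral_norm _).trans ?_
      simp_rw [norm_Faux x y c₃ c₄]
      rw [MeasureTheory.integral_const_mul]
    calc (1 / (2 * Real.pi)) * ‖∫ θ : ℝ, Faux x y c₃ c₄ (θ + μ * Complex.I)‖
        ≤ (1 / (2 * Real.pi)) * (Real.exp (-x * μ + c₃ * y * μ ^ 3 - c₄ * y * μ ^ 4) *
          ∫ θ : ℝ, Real.exp (-3 * y * μ * (c₃ - 2 * c₄ * μ) * θ ^ 2) *
            Real.exp (-c₄ * y * θ ^ 4)) :=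
        mul_le_mul_of_nonneg_left hbound (by positivity)
    _ = _ := by ring
end

section
/- Fix c₃ ∈ ℝ, c₄ > 0, y > 0, and η > 0, and define A(x,y) := (1/(2π)) ∫_ℝ e^{x(η+iθ)} e^{-c₃ y (η+iθ)³} e^{-c₄ y (η+iθ)⁴} dθ/(η+iθ). Then the value of A(x,y) is independent of the choice of η > 0, A is differentiable in x with ∂A/∂x (x,y) = (1/(2π)) ∫_ℝ e^{ixθ} e^{-c₃ y (iθ)³} e^{-c₄ y (iθ)⁴} dθ, and A(x,y) → 0 as x → -∞ for each fixed y > 0. -/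
open Filter

open MeasureTheory

section Aux

/-! ### Elementary inequalities and integrability -/

lemma quart_le (b c θ : ℝ) (hc : 0 < c) : b*θ^2 - c*θ^4 ≤ (b+1)^2/(4*c) - θ^2 := by
  rw [← sub_nonneg]
  have key : (b+1)^2/(4*c) - θ^2 - (b * θ ^ 2 - c * θ ^ 4) = (2*c*θ^2 - (b+1))^2 / (4*c) := by
    field_simp; ring
  rw [key]; positivity

lemma int_exp_quart (a b c : ℝ) (hc : 0 < c) :
    Integrable (fun θ : ℝ => Real.exp (a + (b*θ^2 - c*θ^4))) := by
  have hint : Integrable (fun θ : ℝ => Real.exp (a + (b+1)^2/(4*c)) * Real.exp (-θ^2)) := by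
    have h0 : Integrable (fun θ : ℝ => Real.exp (-θ^2)) := by
      simpa using integrable_exp_neg_mul_sq (one_pos)
    exact h0.const_mul _
  refine hint.mono' (Continuous.aestronglyMeasurable (by fun_prop)) ?_
  filter_upwards with θ
  rw [Real.norm_eq_abs, abs_of_pos (Real.exp_pos _), ← Real.exp_add]
  exact Real.exp_le_exp.2 (by linarith [quart_le b c θ hc])

lemma int_poly_exp_quart (n : ℕ) (a b c : ℝ) (hc : 0 < c) :
    Integrable (fun θ : ℝ => (1+|θ|)^n * Real.exp (a + (b*θ^2 - c*θ^4))) := by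
  refine (int_exp_quart (a + 2*n) (b + n) c hc).mono'
    (Continuous.aestronglyMeasurable (by fun_prop)) ?_
  filter_upwards with θ
  rw [Real.norm_eq_abs, _root_.abs_of_nonneg (by positivity)]
  have h1 : (1+|θ|)^n ≤ Real.exp (n * (2 + θ^2)) := by
    calc (1+|θ|)^n ≤ (Real.exp (2 + θ^2))^n := by
          refine pow_le_pow_left₀ (by positivity) ?_ n
          calc 1 + |θ| ≤ 1 + (1 + θ^2) := by
                have := abs_le_of_sq_le_sq'
                  (by nlinarith [_root_.sq_abs θ, sq_nonneg (|θ|-1)] : |θ|^2 ≤ (1+θ^2)^2)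
                  (by positivity)
                linarith [this.2]
            _ ≤ Real.exp (2 + θ^2) := by
                have := Real.add_one_le_exp (2 + θ^2)
                linarith [sq_nonneg θ]
      _ = Real.exp (n * (2 + θ^2)) := by rw [← Real.exp_nat_mul]
  calc (1+|θ|)^n * Real.exp (a + (b*θ^2 - c*θ^4))
      ≤ Real.exp (n*(2+θ^2)) * Real.exp (a + (b*θ^2 - c*θ^4)) :=
        mul_le_mul_of_nonneg_right h1 (Real.exp_pos _).le
    _ = Real.exp (a + 2*n + ((b+n)*θ^2 - c*θ^4)) := by rw [← Real.exp_add]; ring_nf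

lemma tendsto_exp_quart_atTop (a b c : ℝ) (hc : 0 < c) :
    Tendsto (fun θ : ℝ => Real.exp (a + (b*θ^2 - c*θ^4))) atTop (nhds 0) := by
  have hbound : ∀ θ : ℝ, Real.exp (a + (b*θ^2 - c*θ^4))
      ≤ Real.exp (a + (b+1)^2/(4*c)) * Real.exp (-θ^2) := by
    intro θ
    rw [← Real.exp_add]
    exact Real.exp_le_exp.2 (by linarith [quart_le b c θ hc])
  have h2 : Tendsto (fun θ : ℝ => Real.exp (a + (b+1)^2/(4*c)) * Real.exp (-θ^2)) atTop (nhds 0) := by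
    rw [show (0:ℝ) = Real.exp (a + (b+1)^2/(4*c)) * 0 by ring]
    refine Tendsto.const_mul _ (Real.tendsto_exp_atBot.comp ?_)
    exact tendsto_neg_atBot_iff.mpr (tendsto_pow_atTop two_ne_zero)
  refine squeeze_zero (fun θ => (Real.exp_pos _).le) hbound h2

lemma tendsto_exp_quart_atBot (a b c : ℝ) (hc : 0 < c) :
    Tendsto (fun θ : ℝ => Real.exp (a + (b*θ^2 - c*θ^4))) atBot (nhds 0) := by
  have h := (tendsto_exp_quart_atTop a b c hc).comp tendsto_neg_atBot_atTop
  refine h.congr fun θ => ?_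
  have : (-θ)^2 = θ^2 := by ring
  have h4 : (-θ)^4 = θ^4 := by ring
  simp only [Function.comp_apply, this, h4]

/-! ### The integrand and its derivatives -/

noncomputable def Qf (c₃ c₄ x y : ℝ) (z : ℂ) : ℂ := x*z - c₃*y*z^3 - c₄*y*z^4
noncomputable def Qd (c₃ c₄ x y : ℝ) (z : ℂ) : ℂ := (x:ℂ) - 3*c₃*y*z^2 - 4*c₄*y*z^3
noncomputable def G1 (c₃ c₄ x y : ℝ) (z : ℂ) : ℂ := Complex.exp (Qf c₃ c₄ x y z) / z
noncomputable def G2 (c₃ c₄ x y : ℝ) (z : ℂ) : ℂ := Complex.exp (Qf c₃ c₄ x y z)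
noncomputable def D1 (c₃ c₄ x y : ℝ) (z : ℂ) : ℂ :=
  (Complex.exp (Qf c₃ c₄ x y z) * Qd c₃ c₄ x y z * z - Complex.exp (Qf c₃ c₄ x y z)) / z^2
noncomputable def D2 (c₃ c₄ x y : ℝ) (z : ℂ) : ℂ :=
  Complex.exp (Qf c₃ c₄ x y z) * Qd c₃ c₄ x y z

lemma z_ne (η θ : ℝ) (hη : η ≠ 0) : (η:ℂ) + Complex.I*θ ≠ 0 := fun h => by
  have : ((η:ℂ) + Complex.I*θ).re = 0 := by rw [h]; simp
  simp at this; exact hη this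

lemma hasDerivAt_Qf (c₃ c₄ x y : ℝ) (z : ℂ) :
    HasDerivAt (Qf c₃ c₄ x y) (Qd c₃ c₄ x y z) z := by
  have h : HasDerivAt (Qf c₃ c₄ x y)
      ((x:ℂ)*1 - (c₃:ℂ)*y*(3*z^2) - (c₄:ℂ)*y*(4*z^3)) z :=
    (((hasDerivAt_id z).const_mul _).sub
      (((hasDerivAt_pow 3 z).const_mul ((c₃:ℂ)*y)))).sub
      (((hasDerivAt_pow 4 z).const_mul ((c₄:ℂ)*y)))
  convert h using 1
  unfold Qd; ring

lemma hasDerivAt_G1 (c₃ c₄ x y : ℝ) (z : ℂ) (hz : z ≠ 0) :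
    HasDerivAt (G1 c₃ c₄ x y) (D1 c₃ c₄ x y z) z := by
  have h := ((hasDerivAt_Qf c₃ c₄ x y z).cexp).div (hasDerivAt_id z) hz
  have e1 : G1 c₃ c₄ x y = (fun w => Complex.exp (Qf c₃ c₄ x y w)) / id := by
    funext w; simp [G1]
  have e2 : D1 c₃ c₄ x y z = (Complex.exp (Qf c₃ c₄ x y z) * Qd c₃ c₄ x y z * id z
      - Complex.exp (Qf c₃ c₄ x y z) * 1) / id z ^ 2 := by simp [D1]
  rw [e1, e2]; exact h

lemma hasDerivAt_G2 (c₃ c₄ x y : ℝ) (z : ℂ) :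
    HasDerivAt (G2 c₃ c₄ x y) (D2 c₃ c₄ x y z) z :=
  (hasDerivAt_Qf c₃ c₄ x y z).cexp

lemma hasDerivAt_G1_theta (c₃ c₄ x y η θ : ℝ) (hz : (η:ℂ) + Complex.I*θ ≠ 0) :
    HasDerivAt (fun t : ℝ => G1 c₃ c₄ x y ((η:ℂ) + Complex.I*t))
      (Complex.I * D1 c₃ c₄ x y ((η:ℂ) + Complex.I*θ)) θ := by
  have hf : HasDerivAt (fun w : ℂ => (η:ℂ) + Complex.I*w) Complex.I (θ:ℂ) := by
    simpa using ((hasDerivAt_id (θ:ℂ)).const_mul Complex.I).const_add ((η:ℂ))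
  have h1 := HasDerivAt.comp (θ:ℂ) (hasDerivAt_G1 c₃ c₄ x y _ hz) hf
  simpa [Function.comp_def, mul_comm] using h1.comp_ofReal

lemma hasDerivAt_G1_eta (c₃ c₄ x y θ η : ℝ) (hz : (η:ℂ) + Complex.I*θ ≠ 0) :
    HasDerivAt (fun t : ℝ => G1 c₃ c₄ x y ((t:ℂ) + Complex.I*θ))
      (D1 c₃ c₄ x y ((η:ℂ) + Complex.I*θ)) η := by
  have hf : HasDerivAt (fun w : ℂ => w + Complex.I*θ) 1 (η:ℂ) :=
    (hasDerivAt_id ((η:ℂ))).add_const _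
  have h1 := HasDerivAt.comp ((η:ℂ)) (hasDerivAt_G1 c₃ c₄ x y _ hz) hf
  simpa [Function.comp_def] using h1.comp_ofReal

lemma hasDerivAt_G2_eta (c₃ c₄ x y θ η : ℝ) :
    HasDerivAt (fun t : ℝ => G2 c₃ c₄ x y ((t:ℂ) + Complex.I*θ))
      (D2 c₃ c₄ x y ((η:ℂ) + Complex.I*θ)) η := by
  have hf : HasDerivAt (fun w : ℂ => w + Complex.I*θ) 1 (η:ℂ) :=
    (hasDerivAt_id ((η:ℂ))).add_const _
  have h1 := HasDerivAt.comp ((η:ℂ)) (hasDerivAt_G2 c₃ c₄ x y _) hf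
  simpa [Function.comp_def] using h1.comp_ofReal

lemma hasDerivAt_G2_theta (c₃ c₄ x y η θ : ℝ) :
    HasDerivAt (fun t : ℝ => G2 c₃ c₄ x y ((η:ℂ) + Complex.I*t))
      (Complex.I * D2 c₃ c₄ x y ((η:ℂ) + Complex.I*θ)) θ := by
  have hf : HasDerivAt (fun w : ℂ => (η:ℂ) + Complex.I*w) Complex.I (θ:ℂ) := by
    simpa using ((hasDerivAt_id (θ:ℂ)).const_mul Complex.I).const_add ((η:ℂ))
  have h1 := HasDerivAt.comp (θ:ℂ) (hasDerivAt_G2 c₃ c₄ x y _) hf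
  simpa [Function.comp_def, mul_comm] using h1.comp_ofReal

lemma hasDerivAt_G1_x (c₃ c₄ y η θ : ℝ) (x : ℝ) (hz : (η:ℂ) + Complex.I*θ ≠ 0) :
    HasDerivAt (fun t : ℝ => G1 c₃ c₄ t y ((η:ℂ) + Complex.I*θ))
      (G2 c₃ c₄ x y ((η:ℂ) + Complex.I*θ)) x := by
  set z := (η:ℂ) + Complex.I*θ
  have h1 : HasDerivAt (fun w : ℂ => Complex.exp (w*z - c₃*y*z^3 - c₄*y*z^4) / z)
      (Complex.exp ((x:ℂ)*z - c₃*y*z^3 - c₄*y*z^4) * z / z) (x:ℂ) := by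
    have hq : HasDerivAt (fun w : ℂ => w*z - (c₃:ℂ)*y*z^3 - (c₄:ℂ)*y*z^4) (1*z) (x:ℂ) :=
      (((hasDerivAt_id ((x:ℂ))).mul_const z).sub_const _).sub_const _
    simpa [mul_div_assoc] using (hq.cexp.div_const z)
  rw [mul_div_assoc, div_self hz, mul_one] at h1
  have := h1.comp_ofReal
  simpa [G1, G2, Qf] using this

/-! ### Norm bounds -/

lemma reQf (c₃ c₄ x y η θ : ℝ) :
    (Qf c₃ c₄ x y ((η:ℂ) + Complex.I*θ)).re
      = x*η - c₃*y*(η^3-3*η*θ^2) - c₄*y*(η^4-6*η^2*θ^2+θ^4) := by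
  simp [Qf, pow_succ, Complex.add_re, Complex.add_im, Complex.mul_re, Complex.mul_im]
  ring

lemma rest_le (c₃ c₄ y : ℝ) (h4 : 0 ≤ c₄) (hy : 0 < y) (R η θ : ℝ) (hη : |η| ≤ R) :
    - c₃*y*(η^3-3*η*θ^2) - c₄*y*(η^4-6*η^2*θ^2+θ^4) + c₄*y*θ^4
      ≤ (abs c₃)*y*R^3 + (3*(abs c₃)*y*R + 6*(abs c₄)*y*R^2)*θ^2 := by
  have hR : 0 ≤ R := le_trans (abs_nonneg η) hη
  have h2 : |η|^2 ≤ R^2 := pow_le_pow_left₀ (abs_nonneg η) hη 2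
  have h3 : |η|^3 ≤ R^3 := pow_le_pow_left₀ (abs_nonneg η) hη 3
  have e1 : -(c₃*y*η^3) ≤ (abs c₃)*y*R^3 := by
    calc -(c₃*y*η^3) ≤ |c₃*y*η^3| := neg_le_abs _
      _ = (abs c₃)*y*|η|^3 := by rw [abs_mul, abs_mul, abs_pow, _root_.abs_of_nonneg hy.le]
      _ ≤ (abs c₃)*y*R^3 := mul_le_mul_of_nonneg_left h3 (by positivity)
  have e2 : 3*(c₃*y*η)*θ^2 ≤ 3*(abs c₃)*y*R*θ^2 := by
    have : c₃*y*η ≤ (abs c₃)*y*R := by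
      calc c₃*y*η ≤ |c₃*y*η| := le_abs_self _
        _ = (abs c₃)*y*|η| := by rw [abs_mul, abs_mul, _root_.abs_of_nonneg hy.le]
        _ ≤ (abs c₃)*y*R := mul_le_mul_of_nonneg_left hη (by positivity)
    nlinarith [sq_nonneg θ]
  have e3 : 6*(c₄*y)*η^2*θ^2 ≤ 6*((abs c₄)*y)*R^2*θ^2 := by
    have h4' : c₄*y*η^2 ≤ (abs c₄)*y*R^2 := by
      calc c₄*y*η^2 ≤ |c₄*y*η^2| := le_abs_self _
        _ = (abs c₄)*y*|η|^2 := by rw [abs_mul, abs_mul, _root_.abs_of_nonneg hy.le, abs_pow]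
        _ ≤ (abs c₄)*y*R^2 := mul_le_mul_of_nonneg_left h2 (by positivity)
    nlinarith [sq_nonneg θ]
  have e4 : 0 ≤ c₄*y*η^4 := by positivity
  nlinarith [e1, e2, e3, e4]

lemma norm_exp_Qf_le (c₃ c₄ y : ℝ) (h4 : 0 ≤ c₄) (hy : 0 < y) (R s x η θ : ℝ)
    (hη : |η| ≤ R) (hs : x*η ≤ s) :
    ‖Complex.exp (Qf c₃ c₄ x y ((η:ℂ) + Complex.I*θ))‖
      ≤ Real.exp ((s + (abs c₃)*y*R^3)
          + ((3*(abs c₃)*y*R + 6*(abs c₄)*y*R^2)*θ^2 - (c₄*y)*θ^4)) := by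
  rw [Complex.norm_exp, reQf]
  apply Real.exp_le_exp.2
  have := rest_le c₃ c₄ y h4 hy R η θ hη
  nlinarith [this]

lemma norm_z_le (η θ : ℝ) (R : ℝ) (hη : |η| ≤ R) :
    ‖(η:ℂ) + Complex.I*θ‖ ≤ (R+1)*(1+|θ|) := by
  have hR : 0 ≤ R := le_trans (abs_nonneg η) hη
  calc ‖(η:ℂ) + Complex.I*θ‖ ≤ ‖(η:ℂ)‖ + ‖Complex.I*(θ:ℂ)‖ := norm_add_le _ _
    _ = |η| + |θ| := by simp
    _ ≤ (R+1)*(1+|θ|) := by nlinarith [abs_nonneg θ, abs_nonneg η]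

lemma norm_z_ge (η θ : ℝ) : |η| ≤ ‖(η:ℂ) + Complex.I*θ‖ := by
  have : ((η:ℂ) + Complex.I*θ).re = η := by simp
  calc |η| = |((η:ℂ) + Complex.I*θ).re| := by rw [this]
    _ ≤ ‖(η:ℂ) + Complex.I*θ‖ := Complex.abs_re_le_norm _
    _ = ‖(η:ℂ) + Complex.I*θ‖ := rfl

lemma norm_Qd_le (c₃ c₄ x y : ℝ) (hy : 0 < y) (R η θ : ℝ) (hη : |η| ≤ R) :
    ‖Qd c₃ c₄ x y ((η:ℂ) + Complex.I*θ)‖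
      ≤ ((abs x) + 3*(abs c₃)*y*(R+1)^2 + 4*(abs c₄)*y*(R+1)^3) * (1+|θ|)^3 := by
  set z := (η:ℂ) + Complex.I*θ
  have hR : 0 ≤ R := le_trans (abs_nonneg η) hη
  have hz1 : ‖z‖ ≤ (R+1)*(1+|θ|) := norm_z_le η θ R hη
  have ht : (1:ℝ) ≤ 1+|θ| := by linarith [abs_nonneg θ]
  have h2 : ‖z‖^2 ≤ (R+1)^2*(1+|θ|)^2 := by
    calc ‖z‖^2 ≤ ((R+1)*(1+|θ|))^2 := pow_le_pow_left₀ (norm_nonneg _) hz1 2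
      _ = (R+1)^2*(1+|θ|)^2 := by ring
  have h3 : ‖z‖^3 ≤ (R+1)^3*(1+|θ|)^3 := by
    calc ‖z‖^3 ≤ ((R+1)*(1+|θ|))^3 := pow_le_pow_left₀ (norm_nonneg _) hz1 3
      _ = (R+1)^3*(1+|θ|)^3 := by ring
  have ht23 : (1+|θ|)^2 ≤ (1+|θ|)^3 := pow_le_pow_right₀ ht (by norm_num)
  have ht03 : (1:ℝ) ≤ (1+|θ|)^3 := one_le_pow₀ ht
  have tri : ‖Qd c₃ c₄ x y z‖ ≤ (abs x) + 3*(abs c₃)*y*‖z‖^2 + 4*(abs c₄)*y*‖z‖^3 := by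
    unfold Qd
    refine le_trans (norm_sub_le _ _) ?_
    refine add_le_add (le_trans (norm_sub_le _ _) (add_le_add ?_ ?_)) ?_
    · simp
    · have e3 : ‖(3:ℂ)*c₃*y*z^2‖ = 3*(abs c₃)*y*‖z‖^2 := by
        simp [norm_mul, abs_of_nonneg hy.le, Complex.norm_real]
      exact le_of_eq e3
    · have e4 : ‖(4:ℂ)*c₄*y*z^3‖ = 4*(abs c₄)*y*‖z‖^3 := by
        simp [norm_mul, abs_of_nonneg hy.le, Complex.norm_real]
      exact le_of_eq e4
  have t1 : (abs x) ≤ (abs x)*(1+|θ|)^3 := le_mul_of_one_le_right (abs_nonneg x) ht03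
  have h2' : ‖z‖^2 ≤ (R+1)^2*(1+|θ|)^3 := by
    refine le_trans h2 ?_
    have := mul_le_mul_of_nonneg_left ht23 (by positivity : (0:ℝ) ≤ (R+1)^2)
    linarith
  have t2 : 3*(abs c₃)*y*‖z‖^2 ≤ 3*(abs c₃)*y*((R+1)^2*(1+|θ|)^3) :=
    mul_le_mul_of_nonneg_left h2' (by positivity)
  have t3 : 4*(abs c₄)*y*‖z‖^3 ≤ 4*(abs c₄)*y*((R+1)^3*(1+|θ|)^3) :=
    mul_le_mul_of_nonneg_left h3 (by positivity)
  calc ‖Qd c₃ c₄ x y z‖ ≤ (abs x) + 3*(abs c₃)*y*‖z‖^2 + 4*(abs c₄)*y*‖z‖^3 := tri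
    _ ≤ (abs x)*(1+|θ|)^3 + 3*(abs c₃)*y*((R+1)^2*(1+|θ|)^3)
        + 4*(abs c₄)*y*((R+1)^3*(1+|θ|)^3) := by linarith
    _ = ((abs x) + 3*(abs c₃)*y*(R+1)^2 + 4*(abs c₄)*y*(R+1)^3) * (1+|θ|)^3 := by ring

end Aux

open MeasureTheory

section Aux2

/-! ### Explicit bound function -/

noncomputable def EB (c₃ c₄ y R s θ : ℝ) : ℝ :=
  Real.exp ((s + (abs c₃)*y*R^3)
    + ((3*(abs c₃)*y*R + 6*(abs c₄)*y*R^2)*θ^2 - (c₄*y)*θ^4))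

noncomputable def CQ (c₃ c₄ x y R : ℝ) : ℝ :=
  (abs x) + 3*(abs c₃)*y*(R+1)^2 + 4*(abs c₄)*y*(R+1)^3

lemma EB_pos (c₃ c₄ y R s θ : ℝ) : 0 < EB c₃ c₄ y R s θ := Real.exp_pos _

lemma CQ_nonneg (c₃ c₄ x y R : ℝ) (hy : 0 ≤ y) (hR : 0 ≤ R) : 0 ≤ CQ c₃ c₄ x y R := by
  unfold CQ; positivity

lemma int_EB (c₃ c₄ y R s : ℝ) (h4 : 0 < c₄) (hy : 0 < y) :
    Integrable (fun θ : ℝ => EB c₃ c₄ y R s θ) :=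
  int_exp_quart _ _ _ (mul_pos h4 hy)

lemma int_poly_EB (n : ℕ) (c₃ c₄ y R s : ℝ) (h4 : 0 < c₄) (hy : 0 < y) :
    Integrable (fun θ : ℝ => (1+|θ|)^n * EB c₃ c₄ y R s θ) :=
  int_poly_exp_quart n _ _ _ (mul_pos h4 hy)

lemma tendsto_EB_atTop (c₃ c₄ y R s : ℝ) (h4 : 0 < c₄) (hy : 0 < y) :
    Tendsto (fun θ : ℝ => EB c₃ c₄ y R s θ) atTop (nhds 0) :=
  tendsto_exp_quart_atTop _ _ _ (mul_pos h4 hy)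

lemma tendsto_EB_atBot (c₃ c₄ y R s : ℝ) (h4 : 0 < c₄) (hy : 0 < y) :
    Tendsto (fun θ : ℝ => EB c₃ c₄ y R s θ) atBot (nhds 0) :=
  tendsto_exp_quart_atBot _ _ _ (mul_pos h4 hy)

/-! ### Norm bounds for the integrands -/

lemma norm_G2_le (c₃ c₄ y : ℝ) (h4 : 0 ≤ c₄) (hy : 0 < y) (R s x η θ : ℝ)
    (hη : |η| ≤ R) (hs : x*η ≤ s) :
    ‖G2 c₃ c₄ x y ((η:ℂ) + Complex.I*θ)‖ ≤ EB c₃ c₄ y R s θ :=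
  norm_exp_Qf_le c₃ c₄ y h4 hy R s x η θ hη hs

lemma norm_G1_le (c₃ c₄ y : ℝ) (h4 : 0 ≤ c₄) (hy : 0 < y) (R s m x η θ : ℝ)
    (hη : |η| ≤ R) (hm : 0 < m) (hmη : m ≤ |η|) (hs : x*η ≤ s) :
    ‖G1 c₃ c₄ x y ((η:ℂ) + Complex.I*θ)‖ ≤ (1/m) * EB c₃ c₄ y R s θ := by
  unfold G1
  rw [norm_div]
  have hz := norm_z_ge η θ
  have h1 := norm_exp_Qf_le c₃ c₄ y h4 hy R s x η θ hη hs
  calc ‖Complex.exp (Qf c₃ c₄ x y ((η:ℂ) + Complex.I*θ))‖ / ‖(η:ℂ) + Complex.I*θ‖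
      ≤ EB c₃ c₄ y R s θ / m :=
        div_le_div₀ (EB_pos c₃ c₄ y R s θ).le h1 hm (le_trans hmη hz)
    _ = (1/m) * EB c₃ c₄ y R s θ := by ring

lemma norm_D2_le (c₃ c₄ y : ℝ) (h4 : 0 ≤ c₄) (hy : 0 < y) (R s x η θ : ℝ)
    (hη : |η| ≤ R) (hs : x*η ≤ s) :
    ‖D2 c₃ c₄ x y ((η:ℂ) + Complex.I*θ)‖
      ≤ CQ c₃ c₄ x y R * ((1+|θ|)^3 * EB c₃ c₄ y R s θ) := by
  unfold D2
  rw [norm_mul]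
  have h1 := norm_exp_Qf_le c₃ c₄ y h4 hy R s x η θ hη hs
  have h2 := norm_Qd_le c₃ c₄ x y hy R η θ hη
  calc ‖Complex.exp (Qf c₃ c₄ x y ((η:ℂ) + Complex.I*θ))‖ * ‖Qd c₃ c₄ x y ((η:ℂ) + Complex.I*θ)‖
      ≤ EB c₃ c₄ y R s θ * (CQ c₃ c₄ x y R * (1+|θ|)^3) :=
        mul_le_mul h1 h2 (norm_nonneg _) (EB_pos c₃ c₄ y R s θ).le
    _ = CQ c₃ c₄ x y R * ((1+|θ|)^3 * EB c₃ c₄ y R s θ) := by ring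

lemma norm_D1_le (c₃ c₄ y : ℝ) (h4 : 0 ≤ c₄) (hy : 0 < y) (R s m x η θ : ℝ)
    (hη : |η| ≤ R) (hm : 0 < m) (hmη : m ≤ |η|) (hs : x*η ≤ s) :
    ‖D1 c₃ c₄ x y ((η:ℂ) + Complex.I*θ)‖
      ≤ ((CQ c₃ c₄ x y R * (R+1) + 1)/m^2) * ((1+|θ|)^4 * EB c₃ c₄ y R s θ) := by
  set z := (η:ℂ) + Complex.I*θ
  have hR : 0 ≤ R := le_trans (abs_nonneg η) hη
  have ht : (1:ℝ) ≤ 1+|θ| := by linarith [abs_nonneg θ]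
  have hzm : m ≤ ‖z‖ := le_trans hmη (norm_z_ge η θ)
  have hEx := norm_exp_Qf_le c₃ c₄ y h4 hy R s x η θ hη hs
  have hQd := norm_Qd_le c₃ c₄ x y hy R η θ hη
  have hz1 : ‖z‖ ≤ (R+1)*(1+|θ|) := norm_z_le η θ R hη
  have hCQ : 0 ≤ CQ c₃ c₄ x y R := CQ_nonneg c₃ c₄ x y R hy.le hR
  have hnum : ‖Complex.exp (Qf c₃ c₄ x y z) * Qd c₃ c₄ x y z * z - Complex.exp (Qf c₃ c₄ x y z)‖
      ≤ (CQ c₃ c₄ x y R * (R+1) + 1) * ((1+|θ|)^4 * EB c₃ c₄ y R s θ) := by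
    refine le_trans (norm_sub_le _ _) ?_
    rw [norm_mul, norm_mul]
    have hE0 := (EB_pos c₃ c₄ y R s θ).le
    have b1 : ‖Complex.exp (Qf c₃ c₄ x y z)‖ * ‖Qd c₃ c₄ x y z‖ * ‖z‖
        ≤ EB c₃ c₄ y R s θ * (CQ c₃ c₄ x y R * (1+|θ|)^3) * ((R+1)*(1+|θ|)) := by
      refine mul_le_mul (mul_le_mul hEx hQd (norm_nonneg _) hE0) hz1 (norm_nonneg _) ?_
      positivity
    have b2 : ‖Complex.exp (Qf c₃ c₄ x y z)‖ ≤ (1+|θ|)^4 * EB c₃ c₄ y R s θ := by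
      have h14 : (1:ℝ) ≤ (1+|θ|)^4 := one_le_pow₀ ht
      calc ‖Complex.exp (Qf c₃ c₄ x y z)‖ ≤ EB c₃ c₄ y R s θ := hEx
        _ = 1 * EB c₃ c₄ y R s θ := (one_mul _).symm
        _ ≤ (1+|θ|)^4 * EB c₃ c₄ y R s θ := mul_le_mul_of_nonneg_right h14 hE0
    have e1 : EB c₃ c₄ y R s θ * (CQ c₃ c₄ x y R * (1+|θ|)^3) * ((R+1)*(1+|θ|))
        = (CQ c₃ c₄ x y R * (R+1)) * ((1+|θ|)^4 * EB c₃ c₄ y R s θ) := by ring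
    rw [e1] at b1
    calc ‖Complex.exp (Qf c₃ c₄ x y z)‖ * ‖Qd c₃ c₄ x y z‖ * ‖z‖ + ‖Complex.exp (Qf c₃ c₄ x y z)‖
        ≤ (CQ c₃ c₄ x y R * (R+1)) * ((1+|θ|)^4 * EB c₃ c₄ y R s θ)
          + (1+|θ|)^4 * EB c₃ c₄ y R s θ := add_le_add b1 b2
      _ = (CQ c₃ c₄ x y R * (R+1) + 1) * ((1+|θ|)^4 * EB c₃ c₄ y R s θ) := by ring
  unfold D1
  rw [norm_div]
  have hm2 : m^2 ≤ ‖z^2‖ := by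
    rw [norm_pow]
    exact pow_le_pow_left₀ hm.le hzm 2
  calc ‖Complex.exp (Qf c₃ c₄ x y z) * Qd c₃ c₄ x y z * z - Complex.exp (Qf c₃ c₄ x y z)‖ / ‖z^2‖
      ≤ ((CQ c₃ c₄ x y R * (R+1) + 1) * ((1+|θ|)^4 * EB c₃ c₄ y R s θ)) / m^2 := by
        refine div_le_div₀ ?_ hnum (by positivity) hm2
        exact mul_nonneg (by nlinarith [hCQ]) (mul_nonneg (by positivity) (EB_pos c₃ c₄ y R s θ).le)
    _ = ((CQ c₃ c₄ x y R * (R+1) + 1)/m^2) * ((1+|θ|)^4 * EB c₃ c₄ y R s θ) := by ring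

end Aux2

section Aux3

variable (c₃ c₄ y : ℝ)

/-! ### Continuity and integrability of the integrands -/

lemma cont_G2 (c₃ c₄ x y η : ℝ) :
    Continuous (fun θ : ℝ => G2 c₃ c₄ x y ((η:ℂ) + Complex.I*θ)) := by
  unfold G2 Qf; fun_prop

lemma cont_G1 (c₃ c₄ x y : ℝ) {η : ℝ} (hη : η ≠ 0) :
    Continuous (fun θ : ℝ => G1 c₃ c₄ x y ((η:ℂ) + Complex.I*θ)) := by
  unfold G1 Qf
  exact Continuous.div (by fun_prop) (by fun_prop) (fun θ => z_ne η θ hη)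

lemma cont_D2 (c₃ c₄ x y η : ℝ) :
    Continuous (fun θ : ℝ => D2 c₃ c₄ x y ((η:ℂ) + Complex.I*θ)) := by
  unfold D2 Qd Qf; fun_prop

lemma cont_D1 (c₃ c₄ x y : ℝ) {η : ℝ} (hη : η ≠ 0) :
    Continuous (fun θ : ℝ => D1 c₃ c₄ x y ((η:ℂ) + Complex.I*θ)) := by
  unfold D1 Qd Qf
  exact Continuous.div (by fun_prop) (by fun_prop)
    (fun θ => pow_ne_zero _ (z_ne η θ hη))

lemma int_G1 (h4 : 0 < c₄) (hy : 0 < y) (x : ℝ) {η : ℝ} (hη : 0 < η) :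
    Integrable (fun θ : ℝ => G1 c₃ c₄ x y ((η:ℂ) + Complex.I*θ)) := by
  refine ((int_EB c₃ c₄ y η (x*η) h4 hy).const_mul (1/η)).mono'
    (cont_G1 c₃ c₄ x y hη.ne').aestronglyMeasurable ?_
  filter_upwards with θ
  exact norm_G1_le c₃ c₄ y h4.le hy η (x*η) η x η θ (by rw [abs_of_pos hη]) hη
    (by rw [abs_of_pos hη]) le_rfl

lemma int_G2 (h4 : 0 < c₄) (hy : 0 < y) (x η : ℝ) :
    Integrable (fun θ : ℝ => G2 c₃ c₄ x y ((η:ℂ) + Complex.I*θ)) := by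
  refine (int_EB c₃ c₄ y |η| (x*η) h4 hy).mono'
    (cont_G2 c₃ c₄ x y η).aestronglyMeasurable ?_
  filter_upwards with θ
  exact norm_G2_le c₃ c₄ y h4.le hy |η| (x*η) x η θ le_rfl le_rfl

lemma int_D1 (h4 : 0 < c₄) (hy : 0 < y) (x : ℝ) {η : ℝ} (hη : 0 < η) :
    Integrable (fun θ : ℝ => D1 c₃ c₄ x y ((η:ℂ) + Complex.I*θ)) := by
  refine ((int_poly_EB 4 c₃ c₄ y η (x*η) h4 hy).const_mul
    ((CQ c₃ c₄ x y η * (η+1) + 1)/η^2)).mono'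
    (cont_D1 c₃ c₄ x y hη.ne').aestronglyMeasurable ?_
  filter_upwards with θ
  exact norm_D1_le c₃ c₄ y h4.le hy η (x*η) η x η θ (by rw [abs_of_pos hη]) hη
    (by rw [abs_of_pos hη]) le_rfl

lemma int_D2 (h4 : 0 < c₄) (hy : 0 < y) (x η : ℝ) :
    Integrable (fun θ : ℝ => D2 c₃ c₄ x y ((η:ℂ) + Complex.I*θ)) := by
  refine ((int_poly_EB 3 c₃ c₄ y |η| (x*η) h4 hy).const_mul
    (CQ c₃ c₄ x y |η|)).mono'
    (cont_D2 c₃ c₄ x y η).aestronglyMeasurable ?_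
  filter_upwards with θ
  exact norm_D2_le c₃ c₄ y h4.le hy |η| (x*η) x η θ le_rfl le_rfl

/-! ### Decay in `θ` -/

lemma tendsto_G1_theta_atTop (h4 : 0 < c₄) (hy : 0 < y) (x : ℝ) {η : ℝ} (hη : 0 < η) :
    Tendsto (fun θ : ℝ => G1 c₃ c₄ x y ((η:ℂ) + Complex.I*θ)) atTop (nhds 0) := by
  refine squeeze_zero_norm (fun θ => norm_G1_le c₃ c₄ y h4.le hy η (x*η) η x η θ
    (by rw [abs_of_pos hη]) hη (by rw [abs_of_pos hη]) le_rfl) ?_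
  simpa using (tendsto_EB_atTop c₃ c₄ y η (x*η) h4 hy).const_mul (1/η)

lemma tendsto_G1_theta_atBot (h4 : 0 < c₄) (hy : 0 < y) (x : ℝ) {η : ℝ} (hη : 0 < η) :
    Tendsto (fun θ : ℝ => G1 c₃ c₄ x y ((η:ℂ) + Complex.I*θ)) atBot (nhds 0) := by
  refine squeeze_zero_norm (fun θ => norm_G1_le c₃ c₄ y h4.le hy η (x*η) η x η θ
    (by rw [abs_of_pos hη]) hη (by rw [abs_of_pos hη]) le_rfl) ?_
  simpa using (tendsto_EB_atBot c₃ c₄ y η (x*η) h4 hy).const_mul (1/η)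

lemma tendsto_G2_theta_atTop (h4 : 0 < c₄) (hy : 0 < y) (x η : ℝ) :
    Tendsto (fun θ : ℝ => G2 c₃ c₄ x y ((η:ℂ) + Complex.I*θ)) atTop (nhds 0) :=
  squeeze_zero_norm (fun θ => norm_G2_le c₃ c₄ y h4.le hy |η| (x*η) x η θ le_rfl le_rfl)
    (tendsto_EB_atTop c₃ c₄ y |η| (x*η) h4 hy)

lemma tendsto_G2_theta_atBot (h4 : 0 < c₄) (hy : 0 < y) (x η : ℝ) :
    Tendsto (fun θ : ℝ => G2 c₃ c₄ x y ((η:ℂ) + Complex.I*θ)) atBot (nhds 0) :=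
  squeeze_zero_norm (fun θ => norm_G2_le c₃ c₄ y h4.le hy |η| (x*η) x η θ le_rfl le_rfl)
    (tendsto_EB_atBot c₃ c₄ y |η| (x*η) h4 hy)

/-! ### The integral of a derivative along the line vanishes -/

lemma integral_deriv_zero {h h' : ℝ → ℂ} (hd : ∀ θ, HasDerivAt h (h' θ) θ)
    (hint : Integrable h') (htop : Tendsto h atTop (nhds 0))
    (hbot : Tendsto h atBot (nhds 0)) :
    ∫ θ : ℝ, h' θ = 0 := by
  have h1 : ∫ θ in Set.Iic (0:ℝ), h' θ = h 0 - 0 :=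
    MeasureTheory.integral_Iic_of_hasDerivAt_of_tendsto' (fun t _ => hd t)
      hint.integrableOn hbot
  have h2 : ∫ θ in Set.Ioi (0:ℝ), h' θ = 0 - h 0 :=
    MeasureTheory.integral_Ioi_of_hasDerivAt_of_tendsto' (fun t _ => hd t)
      hint.integrableOn htop
  have h3 := intervalIntegral.integral_Iic_add_Ioi (b := (0:ℝ))
    hint.integrableOn hint.integrableOn
  rw [← h3, h1, h2]; ring

lemma integral_D1_zero (h4 : 0 < c₄) (hy : 0 < y) (x : ℝ) {η : ℝ} (hη : 0 < η) :
    ∫ θ : ℝ, D1 c₃ c₄ x y ((η:ℂ) + Complex.I*θ) = 0 := by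
  have key : ∫ θ : ℝ, Complex.I * D1 c₃ c₄ x y ((η:ℂ) + Complex.I*θ) = 0 :=
    integral_deriv_zero (fun θ => hasDerivAt_G1_theta c₃ c₄ x y η θ (z_ne η θ hη.ne'))
      ((int_D1 c₃ c₄ y h4 hy x hη).const_mul Complex.I)
      (tendsto_G1_theta_atTop c₃ c₄ y h4 hy x hη) (tendsto_G1_theta_atBot c₃ c₄ y h4 hy x hη)
  rw [MeasureTheory.integral_const_mul] at key
  exact (mul_eq_zero.1 key).resolve_left Complex.I_ne_zero

lemma integral_D2_zero (h4 : 0 < c₄) (hy : 0 < y) (x η : ℝ) :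
    ∫ θ : ℝ, D2 c₃ c₄ x y ((η:ℂ) + Complex.I*θ) = 0 := by
  have key : ∫ θ : ℝ, Complex.I * D2 c₃ c₄ x y ((η:ℂ) + Complex.I*θ) = 0 :=
    integral_deriv_zero (fun θ => hasDerivAt_G2_theta c₃ c₄ x y η θ)
      ((int_D2 c₃ c₄ y h4 hy x η).const_mul Complex.I)
      (tendsto_G2_theta_atTop c₃ c₄ y h4 hy x η) (tendsto_G2_theta_atBot c₃ c₄ y h4 hy x η)
  rw [MeasureTheory.integral_const_mul] at key
  exact (mul_eq_zero.1 key).resolve_left Complex.I_ne_zero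

end Aux3

section Aux4

variable (c₃ c₄ y : ℝ)

lemma H1_deriv_eta (h4 : 0 < c₄) (hy : 0 < y) (x : ℝ) {η₀ : ℝ} (hη : 0 < η₀) :
    HasDerivAt (fun η : ℝ => ∫ θ : ℝ, G1 c₃ c₄ x y ((η:ℂ) + Complex.I*θ))
      (∫ θ : ℝ, D1 c₃ c₄ x y ((η₀:ℂ) + Complex.I*θ)) η₀ := by
  have hball : ∀ η ∈ Metric.ball η₀ (η₀/2), η₀/2 ≤ η ∧ |η| ≤ 2*η₀ ∧ 0 < η := by
    intro η hmem
    rw [Real.ball_eq_Ioo] at hmem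
    obtain ⟨hl, hr⟩ := hmem
    have h1 : η₀/2 ≤ η := by linarith
    have h2 : 0 < η := by linarith
    exact ⟨h1, by rw [abs_of_pos h2]; linarith, h2⟩
  refine (hasDerivAt_integral_of_dominated_loc_of_deriv_le
    (F := fun (η : ℝ) (θ : ℝ) => G1 c₃ c₄ x y ((η:ℂ) + Complex.I*θ))
    (F' := fun (η : ℝ) (θ : ℝ) => D1 c₃ c₄ x y ((η:ℂ) + Complex.I*θ))
    (bound := fun θ : ℝ => ((CQ c₃ c₄ x y (2*η₀) * (2*η₀+1) + 1)/(η₀/2)^2)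
      * ((1+|θ|)^4 * EB c₃ c₄ y (2*η₀) ((abs x)*(2*η₀)) θ))
    (Metric.ball_mem_nhds η₀ (half_pos hη)) ?_ ?_ ?_ ?_ ?_ ?_).2
  · filter_upwards [Metric.ball_mem_nhds η₀ (half_pos hη)] with η hmem
    exact (cont_G1 c₃ c₄ x y (hball η hmem).2.2.ne').aestronglyMeasurable
  · exact int_G1 c₃ c₄ y h4 hy x hη
  · exact (cont_D1 c₃ c₄ x y hη.ne').aestronglyMeasurable
  · filter_upwards with θ
    intro η hmem
    obtain ⟨h1, h2, h3⟩ := hball η hmem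
    refine norm_D1_le c₃ c₄ y h4.le hy (2*η₀) ((abs x)*(2*η₀)) (η₀/2) x η θ h2
      (half_pos hη) (by rw [abs_of_pos h3]; exact h1) ?_
    calc x*η ≤ |x*η| := le_abs_self _
      _ = (abs x)*|η| := abs_mul x η
      _ ≤ (abs x)*(2*η₀) := mul_le_mul_of_nonneg_left h2 (abs_nonneg x)
  · exact (int_poly_EB 4 c₃ c₄ y (2*η₀) ((abs x)*(2*η₀)) h4 hy).const_mul _
  · filter_upwards with θ
    intro η hmem
    exact hasDerivAt_G1_eta c₃ c₄ x y θ η (z_ne η θ (hball η hmem).2.2.ne')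

lemma H2_deriv_eta (h4 : 0 < c₄) (hy : 0 < y) (x : ℝ) (η₀ : ℝ) :
    HasDerivAt (fun η : ℝ => ∫ θ : ℝ, G2 c₃ c₄ x y ((η:ℂ) + Complex.I*θ))
      (∫ θ : ℝ, D2 c₃ c₄ x y ((η₀:ℂ) + Complex.I*θ)) η₀ := by
  have hball : ∀ η ∈ Metric.ball η₀ 1, |η| ≤ (abs η₀) + 1 := by
    intro η hmem
    rw [Real.ball_eq_Ioo] at hmem
    obtain ⟨hl, hr⟩ := hmem
    rw [abs_le]
    constructor
    · have := neg_abs_le η₀; linarith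
    · have := le_abs_self η₀; linarith
  refine (hasDerivAt_integral_of_dominated_loc_of_deriv_le
    (F := fun (η : ℝ) (θ : ℝ) => G2 c₃ c₄ x y ((η:ℂ) + Complex.I*θ))
    (F' := fun (η : ℝ) (θ : ℝ) => D2 c₃ c₄ x y ((η:ℂ) + Complex.I*θ))
    (bound := fun θ : ℝ => CQ c₃ c₄ x y ((abs η₀)+1)
      * ((1+|θ|)^3 * EB c₃ c₄ y ((abs η₀)+1) ((abs x)*((abs η₀)+1)) θ))
    (Metric.ball_mem_nhds η₀ one_pos) ?_ ?_ ?_ ?_ ?_ ?_).2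
  · filter_upwards with η
    exact (cont_G2 c₃ c₄ x y η).aestronglyMeasurable
  · exact int_G2 c₃ c₄ y h4 hy x η₀
  · exact (cont_D2 c₃ c₄ x y η₀).aestronglyMeasurable
  · filter_upwards with θ
    intro η hmem
    refine norm_D2_le c₃ c₄ y h4.le hy ((abs η₀)+1) ((abs x)*((abs η₀)+1)) x η θ (hball η hmem) ?_
    calc x*η ≤ |x*η| := le_abs_self _
      _ = (abs x)*|η| := abs_mul x η
      _ ≤ (abs x)*((abs η₀)+1) := mul_le_mul_of_nonneg_left (hball η hmem) (abs_nonneg x)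
  · exact (int_poly_EB 3 c₃ c₄ y ((abs η₀)+1) ((abs x)*((abs η₀)+1)) h4 hy).const_mul _
  · filter_upwards with θ
    intro η _
    exact hasDerivAt_G2_eta c₃ c₄ x y θ η

lemma H1_deriv_x (h4 : 0 < c₄) (hy : 0 < y) {η : ℝ} (hη : 0 < η) (x₀ : ℝ) :
    HasDerivAt (fun x : ℝ => ∫ θ : ℝ, G1 c₃ c₄ x y ((η:ℂ) + Complex.I*θ))
      (∫ θ : ℝ, G2 c₃ c₄ x₀ y ((η:ℂ) + Complex.I*θ)) x₀ := by
  have hball : ∀ x ∈ Metric.ball x₀ 1, (abs x) ≤ (abs x₀) + 1 := by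
    intro x hmem
    rw [Real.ball_eq_Ioo] at hmem
    obtain ⟨hl, hr⟩ := hmem
    rw [abs_le]
    constructor
    · have := neg_abs_le x₀; linarith
    · have := le_abs_self x₀; linarith
  refine (hasDerivAt_integral_of_dominated_loc_of_deriv_le
    (F := fun (x : ℝ) (θ : ℝ) => G1 c₃ c₄ x y ((η:ℂ) + Complex.I*θ))
    (F' := fun (x : ℝ) (θ : ℝ) => G2 c₃ c₄ x y ((η:ℂ) + Complex.I*θ))
    (bound := fun θ : ℝ => EB c₃ c₄ y η (((abs x₀)+1)*η) θ)
    (Metric.ball_mem_nhds x₀ one_pos) ?_ ?_ ?_ ?_ ?_ ?_).2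
  · filter_upwards with x
    exact (cont_G1 c₃ c₄ x y hη.ne').aestronglyMeasurable
  · exact int_G1 c₃ c₄ y h4 hy x₀ hη
  · exact (cont_G2 c₃ c₄ x₀ y η).aestronglyMeasurable
  · filter_upwards with θ
    intro x hmem
    refine norm_G2_le c₃ c₄ y h4.le hy η (((abs x₀)+1)*η) x η θ (by rw [abs_of_pos hη]) ?_
    calc x*η ≤ (abs x)*η := mul_le_mul_of_nonneg_right (le_abs_self x) hη.le
      _ ≤ ((abs x₀)+1)*η := mul_le_mul_of_nonneg_right (hball x hmem) hη.le
  · exact int_EB c₃ c₄ y η (((abs x₀)+1)*η) h4 hy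
  · filter_upwards with θ
    intro x _
    exact hasDerivAt_G1_x c₃ c₄ y η θ x (z_ne η θ hη.ne')

/-! ### Constancy in `η` -/

lemma H1_const (h4 : 0 < c₄) (hy : 0 < y) (x : ℝ) {a b : ℝ} (ha : 0 < a) (hab : a ≤ b) :
    ∫ θ : ℝ, G1 c₃ c₄ x y ((b:ℂ) + Complex.I*θ)
      = ∫ θ : ℝ, G1 c₃ c₄ x y ((a:ℂ) + Complex.I*θ) := by
  have key := constant_of_has_deriv_right_zero
    (f := fun η : ℝ => ∫ θ : ℝ, G1 c₃ c₄ x y ((η:ℂ) + Complex.I*θ)) (a := a) (b := b)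
    (fun η hη => (H1_deriv_eta c₃ c₄ y h4 hy x (lt_of_lt_of_le ha hη.1)).continuousAt.continuousWithinAt)
    (fun η hη => by
      have hpos : 0 < η := lt_of_lt_of_le ha hη.1
      have h := H1_deriv_eta c₃ c₄ y h4 hy x hpos
      rw [integral_D1_zero c₃ c₄ y h4 hy x hpos] at h
      exact h.hasDerivWithinAt)
  exact key b (Set.right_mem_Icc.2 hab)

lemma H2_const (h4 : 0 < c₄) (hy : 0 < y) (x : ℝ) {a b : ℝ} (hab : a ≤ b) :
    ∫ θ : ℝ, G2 c₃ c₄ x y ((b:ℂ) + Complex.I*θ)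
      = ∫ θ : ℝ, G2 c₃ c₄ x y ((a:ℂ) + Complex.I*θ) := by
  have key := constant_of_has_deriv_right_zero
    (f := fun η : ℝ => ∫ θ : ℝ, G2 c₃ c₄ x y ((η:ℂ) + Complex.I*θ)) (a := a) (b := b)
    (fun η _ => (H2_deriv_eta c₃ c₄ y h4 hy x η).continuousAt.continuousWithinAt)
    (fun η _ => by
      have h := H2_deriv_eta c₃ c₄ y h4 hy x η
      rw [integral_D2_zero c₃ c₄ y h4 hy x η] at h
      exact h.hasDerivWithinAt)
  exact key b (Set.right_mem_Icc.2 hab)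

lemma H2_eq_zero_line (h4 : 0 < c₄) (hy : 0 < y) (x η : ℝ) :
    ∫ θ : ℝ, G2 c₃ c₄ x y ((η:ℂ) + Complex.I*θ)
      = ∫ θ : ℝ, G2 c₃ c₄ x y (((0:ℝ):ℂ) + Complex.I*θ) := by
  rcases le_total 0 η with h | h
  · exact H2_const c₃ c₄ y h4 hy x h
  · exact (H2_const c₃ c₄ y h4 hy x h).symm

end Aux4

/-- The activation function
`A_η(x,y) = (1/2π) ∫_ℝ e^{x(η+iθ)} e^{-c₃y(η+iθ)³} e^{-c₄y(η+iθ)⁴} dθ/(η+iθ)`. -/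
noncomputable def activationFun (c₃ c₄ η x y : ℝ) : ℂ :=
  (1 / (2 * Real.pi) : ℂ) * ∫ θ : ℝ,
    Complex.exp ((x : ℂ) * ((η : ℂ) + Complex.I * (θ : ℂ))) *
      Complex.exp (-(c₃ : ℂ) * (y : ℂ) * ((η : ℂ) + Complex.I * (θ : ℂ)) ^ 3) *
      Complex.exp (-(c₄ : ℂ) * (y : ℂ) * ((η : ℂ) + Complex.I * (θ : ℂ)) ^ 4)
      / ((η : ℂ) + Complex.I * (θ : ℂ))

lemma activation_eq (c₃ c₄ η x y : ℝ) :
    activationFun c₃ c₄ η x y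
      = (1 / (2 * Real.pi) : ℂ) * ∫ θ : ℝ, G1 c₃ c₄ x y ((η:ℂ) + Complex.I*θ) := by
  unfold activationFun
  congr 1
  have : (fun θ : ℝ =>
      Complex.exp ((x : ℂ) * ((η : ℂ) + Complex.I * (θ : ℂ))) *
        Complex.exp (-(c₃ : ℂ) * (y : ℂ) * ((η : ℂ) + Complex.I * (θ : ℂ)) ^ 3) *
        Complex.exp (-(c₄ : ℂ) * (y : ℂ) * ((η : ℂ) + Complex.I * (θ : ℂ)) ^ 4)
        / ((η : ℂ) + Complex.I * (θ : ℂ)))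
      = fun θ : ℝ => G1 c₃ c₄ x y ((η:ℂ) + Complex.I*θ) := by
    funext θ
    unfold G1 Qf
    rw [← Complex.exp_add, ← Complex.exp_add]
    congr 2
    ring
  rw [this]

/-- The activation function is independent of `η > 0`, is differentiable in `x` with
derivative `(1/2π) ∫_ℝ e^{ixθ} e^{-c₃y(iθ)³} e^{-c₄y(iθ)⁴} dθ`, and tends to `0`
as `x → -∞`. -/
theorem stmt_17 (c₃ c₄ : ℝ) (h4 : 0 < c₄) (y : ℝ) (hy : 0 < y) :
    (∀ η₁ η₂ : ℝ, 0 < η₁ → 0 < η₂ → ∀ x : ℝ,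
      activationFun c₃ c₄ η₁ x y = activationFun c₃ c₄ η₂ x y) ∧
    (∀ η : ℝ, 0 < η → ∀ x : ℝ,
      HasDerivAt (fun x' : ℝ => activationFun c₃ c₄ η x' y)
        ((1 / (2 * Real.pi) : ℂ) * ∫ θ : ℝ,
          Complex.exp (Complex.I * (x : ℂ) * (θ : ℂ)) *
            Complex.exp (-(c₃ : ℂ) * (y : ℂ) * (Complex.I * (θ : ℂ)) ^ 3) *
            Complex.exp (-(c₄ : ℂ) * (y : ℂ) * (Complex.I * (θ : ℂ)) ^ 4)) x) ∧
    (∀ η : ℝ, 0 < η →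
      Tendsto (fun x : ℝ => activationFun c₃ c₄ η x y) atBot (nhds 0)) := by
  refine ⟨?_, ?_, ?_⟩
  · -- η-independence
    intro η₁ η₂ h1 h2 x
    rw [activation_eq, activation_eq]
    congr 1
    rcases le_total η₁ η₂ with h | h
    · exact (H1_const c₃ c₄ y h4 hy x h1 h).symm
    · exact H1_const c₃ c₄ y h4 hy x h2 h
  · -- derivative in x
    intro η hη x
    have hfun : (fun x' : ℝ => activationFun c₃ c₄ η x' y)
        = fun x' : ℝ => (1 / (2 * Real.pi) : ℂ)
            * ∫ θ : ℝ, G1 c₃ c₄ x' y ((η:ℂ) + Complex.I*θ) :=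
      funext fun x' => activation_eq c₃ c₄ η x' y
    rw [hfun]
    have hd := HasDerivAt.const_mul ((1 / (2 * Real.pi) : ℂ))
      (H1_deriv_x c₃ c₄ y h4 hy hη x)
    have hval : (∫ θ : ℝ,
        Complex.exp (Complex.I * (x : ℂ) * (θ : ℂ)) *
          Complex.exp (-(c₃ : ℂ) * (y : ℂ) * (Complex.I * (θ : ℂ)) ^ 3) *
          Complex.exp (-(c₄ : ℂ) * (y : ℂ) * (Complex.I * (θ : ℂ)) ^ 4))
        = ∫ θ : ℝ, G2 c₃ c₄ x y ((η:ℂ) + Complex.I*θ) := by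
      rw [H2_eq_zero_line c₃ c₄ y h4 hy x η]
      have : (fun θ : ℝ =>
          Complex.exp (Complex.I * (x : ℂ) * (θ : ℂ)) *
            Complex.exp (-(c₃ : ℂ) * (y : ℂ) * (Complex.I * (θ : ℂ)) ^ 3) *
            Complex.exp (-(c₄ : ℂ) * (y : ℂ) * (Complex.I * (θ : ℂ)) ^ 4))
          = fun θ : ℝ => G2 c₃ c₄ x y (((0:ℝ):ℂ) + Complex.I*θ) := by
        funext θ
        unfold G2 Qf
        rw [← Complex.exp_add, ← Complex.exp_add]
        congr 1
        push_cast
        ring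
      rw [this]
    rw [hval]
    exact hd
  · -- decay as x → -∞
    intro η hη
    set K := ‖(1 / (2 * Real.pi) : ℂ)‖ with hK
    set C := ∫ θ : ℝ, (1/η) * EB c₃ c₄ y η 0 θ with hC
    have hC0 : 0 ≤ C := by
      rw [hC]
      refine MeasureTheory.integral_nonneg fun θ => ?_
      have := (EB_pos c₃ c₄ y η 0 θ).le
      positivity
    have hbound : ∀ x : ℝ, ‖activationFun c₃ c₄ η x y‖ ≤ K * (Real.exp (x*η) * C) := by
      intro x
      rw [activation_eq, norm_mul]
      refine mul_le_mul_of_nonneg_left ?_ (norm_nonneg _)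
      have hEB : ∀ θ : ℝ, EB c₃ c₄ y η (x*η) θ = Real.exp (x*η) * EB c₃ c₄ y η 0 θ := by
        intro θ
        unfold EB
        rw [← Real.exp_add]
        ring_nf
      have hint : Integrable (fun θ : ℝ => Real.exp (x*η) * ((1/η) * EB c₃ c₄ y η 0 θ)) :=
        ((int_EB c₃ c₄ y η 0 h4 hy).const_mul (1/η)).const_mul _
      have hle : ∀ θ : ℝ, ‖G1 c₃ c₄ x y ((η:ℂ) + Complex.I*θ)‖
          ≤ Real.exp (x*η) * ((1/η) * EB c₃ c₄ y η 0 θ) := by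
        intro θ
        have h := norm_G1_le c₃ c₄ y h4.le hy η (x*η) η x η θ
          (by rw [abs_of_pos hη]) hη (by rw [abs_of_pos hη]) le_rfl
        rw [hEB θ] at h
        calc ‖G1 c₃ c₄ x y ((η:ℂ) + Complex.I*θ)‖
            ≤ (1/η) * (Real.exp (x*η) * EB c₃ c₄ y η 0 θ) := h
          _ = Real.exp (x*η) * ((1/η) * EB c₃ c₄ y η 0 θ) := by ring
      calc ‖∫ θ : ℝ, G1 c₃ c₄ x y ((η:ℂ) + Complex.I*θ)‖
          ≤ ∫ θ : ℝ, Real.exp (x*η) * ((1/η) * EB c₃ c₄ y η 0 θ) :=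
            MeasureTheory.norm_integral_le_of_norm_le hint
              (Filter.Eventually.of_forall hle)
        _ = Real.exp (x*η) * C := by rw [hC, MeasureTheory.integral_const_mul]
    refine squeeze_zero_norm hbound ?_
    have hxη : Tendsto (fun x : ℝ => x*η) atBot atBot :=
      tendsto_id.atBot_mul_const hη
    have hexp : Tendsto (fun x : ℝ => Real.exp (x*η)) atBot (nhds 0) :=
      Real.tendsto_exp_atBot.comp hxη
    have : Tendsto (fun x : ℝ => K * (Real.exp (x*η) * C)) atBot (nhds (K * (0 * C))) :=
      ((hexp.mul_const C).const_mul K)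
    simpa using this
end
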